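/- arXiv:1006.2610 — 7 statements merged into one kernel-verified Lean document; each statement's English description precedes it below -/
import Mathlib

section
/- Let K be an algebraic closure of F_p. A point (x₀, y₀) ∈ K² is a singular point of f (that is, f and both partial derivatives f_x, f_y vanish at (x₀,y₀)) if and only if (x₀+1)^{m−1} = x₀^{m−1} = y₀^{m−1} = (y₀+1)^{m−1}. In particular at every singular point x₀, y₀ ∉ {0, −1}. -/
open MvPolynomial

/-- `f(x,y) = (x+1)^m - x^m - (y+1)^m + y^m` in `F_p[x,y]`. -/
noncomputable def fpoly (p m : ℕ) : MvPolynomial (Fin 2) (ZMod p) :=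
  (X 0 + 1) ^ m - X 0 ^ m - (X 1 + 1) ^ m + X 1 ^ m

/-- The polynomial `g(X + a, Y + b)`, i.e. `g` translated so that `(a,b)` becomes the
origin. -/
noncomputable def shiftAt {K : Type*} [CommRing K] (g : MvPolynomial (Fin 2) K) (a b : K) :
    MvPolynomial (Fin 2) K :=
  MvPolynomial.aeval (fun i : Fin 2 => MvPolynomial.X i + MvPolynomial.C (![a, b] i)) g

/-- The multiplicity of `g` at the point `(a,b)` : the least `n` such that the homogeneous
component of degree `n` of `g(X+a, Y+b)` is nonzero. -/
noncomputable def multAt {K : Type*} [CommRing K] (g : MvPolynomial (Fin 2) K) (a b : K) : ℕ :=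
  sInf {n : ℕ | MvPolynomial.homogeneousComponent n (shiftAt g a b) ≠ 0}

/-- `(a,b)` is a singular point of `g` : `g` and both its partial derivatives
vanish at `(a,b)`. -/
def IsSingAt {K : Type*} [CommRing K] (g : MvPolynomial (Fin 2) K) (a b : K) : Prop :=
  MvPolynomial.eval ![a, b] g = 0 ∧
  MvPolynomial.eval ![a, b] (MvPolynomial.pderiv 0 g) = 0 ∧
  MvPolynomial.eval ![a, b] (MvPolynomial.pderiv 1 g) = 0

/-- Base change of a two-variable polynomial over `F_p` to the algebraic closure. -/
noncomputable def toK (p : ℕ) [Fact p.Prime] (g : MvPolynomial (Fin 2) (ZMod p)) :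
    MvPolynomial (Fin 2) (AlgebraicClosure (ZMod p)) :=
  MvPolynomial.map (algebraMap (ZMod p) (AlgebraicClosure (ZMod p))) g

/-- A point `(x₀,y₀)` over the algebraic closure `K` of `F_p` is a singular point of `f`
iff `(x₀+1)^{m-1} = x₀^{m-1} = y₀^{m-1} = (y₀+1)^{m-1}`; in particular at every singular
point `x₀, y₀ ∉ {0, -1}`. -/
theorem stmt8 (p : ℕ) [Fact p.Prime] (hp : Odd p)
    (m : ℕ) (hm : 3 ≤ m) (hm1 : m ≡ 1 [MOD p]) :
    (∀ x0 y0 : AlgebraicClosure (ZMod p),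
      IsSingAt (toK p (fpoly p m)) x0 y0 ↔
        ((x0 + 1) ^ (m - 1) = x0 ^ (m - 1) ∧ x0 ^ (m - 1) = y0 ^ (m - 1) ∧
          y0 ^ (m - 1) = (y0 + 1) ^ (m - 1))) ∧
    (∀ x0 y0 : AlgebraicClosure (ZMod p),
      IsSingAt (toK p (fpoly p m)) x0 y0 →
        x0 ≠ 0 ∧ x0 ≠ -1 ∧ y0 ≠ 0 ∧ y0 ≠ -1) := by
  set K := AlgebraicClosure (ZMod p) with hK
  have hmZ : ((m : ℕ) : ZMod p) = 1 := by
    rw [← Nat.cast_one, ZMod.natCast_eq_natCast_iff]; exact hm1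
  have hmK : ((m : ℕ) : K) = 1 := by
    rw [← map_natCast (algebraMap (ZMod p) K) m, hmZ, map_one]
  obtain ⟨n, rfl⟩ : ∃ n, m = n + 1 := ⟨m - 1, by omega⟩
  have hn : 2 ≤ n := by omega
  have hn0 : n ≠ 0 := by omega
  simp only [Nat.add_sub_cancel]
  have heval : ∀ x0 y0 : K, IsSingAt (toK p (fpoly p (n+1))) x0 y0 ↔
      ((x0+1)^(n+1) - x0^(n+1) - (y0+1)^(n+1) + y0^(n+1) = 0 ∧
       (x0+1)^n = x0^n ∧ (y0+1)^n = y0^n) := by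
    intro x0 y0
    have e0 : MvPolynomial.eval ![x0,y0] (toK p (fpoly p (n+1))) =
        (x0+1)^(n+1) - x0^(n+1) - (y0+1)^(n+1) + y0^(n+1) := by
      simp [toK, fpoly, eval_map]
    have e1 : MvPolynomial.eval ![x0,y0] (pderiv 0 (toK p (fpoly p (n+1)))) =
        (x0+1)^n - x0^n := by
      rw [toK, pderiv_map]
      have : ((n:K) + 1) = 1 := by exact_mod_cast hmK
      simp [fpoly, pderiv_pow, eval_map, this]
    have e2 : MvPolynomial.eval ![x0,y0] (pderiv 1 (toK p (fpoly p (n+1)))) =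
        -((y0+1)^n - y0^n) := by
      rw [toK, pderiv_map]
      have : ((n:K) + 1) = 1 := by exact_mod_cast hmK
      simp [fpoly, pderiv_pow, eval_map, this]
      ring
    rw [IsSingAt, e0, e1, e2]
    constructor
    · rintro ⟨h0, h1, h2⟩
      exact ⟨h0, sub_eq_zero.mp h1, sub_eq_zero.mp (neg_eq_zero.mp h2)⟩
    · rintro ⟨h0, h1, h2⟩
      exact ⟨h0, by rw [h1, sub_self], by rw [h2, sub_self, neg_zero]⟩
  constructor
  · intro x0 y0
    rw [heval]
    constructor
    · rintro ⟨h0, hx, hy⟩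
      refine ⟨hx, ?_, hy.symm⟩
      linear_combination h0 - (x0+1) * hx + (y0+1) * hy
    · rintro ⟨hx, hxy, hy⟩
      refine ⟨?_, hx, hy.symm⟩
      linear_combination (x0+1) * hx - (y0+1) * hy.symm + hxy
  · intro x0 y0 hsing
    obtain ⟨h0, hx, hy⟩ := (heval x0 y0).mp hsing
    refine ⟨?_, ?_, ?_, ?_⟩
    · rintro rfl
      simp [zero_pow hn0] at hx
    · rintro rfl
      rw [neg_add_cancel, zero_pow hn0] at hx
      exact pow_ne_zero n (by exact neg_ne_zero.mpr one_ne_zero) hx.symm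
    · rintro rfl
      simp [zero_pow hn0] at hy
    · rintro rfl
      rw [neg_add_cancel, zero_pow hn0] at hy
      exact pow_ne_zero n (by exact neg_ne_zero.mpr one_ne_zero) hy.symm
end

section
/- Write m − 1 = Σ_{j=1}^b m_j p^{i_j} with 1 ≤ m_j ≤ p−1 and l = i_1 < i_2 < … < i_b (the base-p expansion of m−1), and set k = (m−1)/p^l. Then the number of points (x₀,y₀) in K², K an algebraic closure of F_p, that are singular points of h is at most (k − 1)·(2k − (m_b + 1)·p^{i_b − l}). -/
open MvPolynomial

open Polynomial in
lemma aux_card_roots {K : Type*} [Field K] [DecidableEq K] (f : K[X]) (n : ℕ) (hf : f ≠ 0)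
    (hd : f.natDegree ≤ n) : f.roots.toFinset.card ≤ n :=
  le_trans (le_trans (Multiset.toFinset_card_le _) (Polynomial.card_roots' f)) hd

open Polynomial in
lemma aux_degA {K : Type*} [Field K] (k : ℕ) :
    (((Polynomial.X + 1) ^ k - Polynomial.X ^ k : K[X])).natDegree ≤ k - 1 := by
  rw [Polynomial.natDegree_le_iff_coeff_eq_zero]
  intro N hN
  have hNk : k ≤ N := by omega
  rw [Polynomial.coeff_sub, Polynomial.coeff_X_add_one_pow, Polynomial.coeff_X_pow]
  rcases eq_or_lt_of_le hNk with h | h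
  · simp [← h, Nat.choose_self]
  · have hne : ¬ N = k := by omega
    simp [Nat.choose_eq_zero_of_lt h, hne]

open Polynomial in
lemma aux_degG {K : Type*} [Field K] (q n : ℕ) :
    (((Polynomial.X ^ q - 1) ^ n - Polynomial.X ^ (n * q) : K[X])).natDegree ≤ (n - 1) * q := by
  have h1 : (Polynomial.X ^ (n * q) : K[X]) = ((Polynomial.X ^ q - 1) + 1) ^ n := by
    rw [sub_add_cancel, ← pow_mul, mul_comm]
  rw [h1, add_pow, Finset.sum_range_succ]
  simp only [Nat.sub_self, pow_zero, Nat.choose_self, Nat.cast_one, mul_one, one_pow]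
  have h2 : ((Polynomial.X ^ q - 1) ^ n
      - ((∑ i ∈ Finset.range n, (Polynomial.X ^ q - 1) ^ i * (n.choose i : K[X])) + (Polynomial.X ^ q - 1) ^ n) : K[X])
      = -(∑ i ∈ Finset.range n, (Polynomial.X ^ q - 1) ^ i * (n.choose i : K[X])) := by ring
  rw [h2, Polynomial.natDegree_neg]
  apply Polynomial.natDegree_sum_le_of_forall_le
  intro i hi
  have hi' : i ≤ n - 1 := by
    have := Finset.mem_range.mp hi; omega
  calc ((Polynomial.X ^ q - 1 : K[X]) ^ i * (n.choose i : K[X])).natDegree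
      ≤ ((Polynomial.X ^ q - 1 : K[X]) ^ i).natDegree + (n.choose i : K[X]).natDegree :=
        Polynomial.natDegree_mul_le
    _ ≤ i * q := by
        rw [Polynomial.natDegree_natCast, add_zero]
        refine le_trans Polynomial.natDegree_pow_le ?_
        refine Nat.mul_le_mul_left i ?_
        refine le_trans (Polynomial.natDegree_sub_le _ _) ?_
        simp [Polynomial.natDegree_X_pow]
    _ ≤ (n - 1) * q := Nat.mul_le_mul_right q hi'

lemma aux_sing (p : ℕ) [Fact p.Prime] (m : ℕ) (hm : 3 ≤ m) (hm1 : m ≡ 1 [MOD p])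
    (h : MvPolynomial (Fin 2) (ZMod p))
    (hfh : fpoly p m = (X 0 - X 1) * h)
    (x y : AlgebraicClosure (ZMod p)) (hs : IsSingAt (toK p h) x y) :
    (x+1)^(m-1) = x^(m-1) ∧ (y+1)^(m-1) = y^(m-1) ∧ x^(m-1) = y^(m-1) := by
  obtain ⟨h0, h1, h2⟩ := hs
  have hF : ((X 0 + 1) ^ m - X 0 ^ m - (X 1 + 1) ^ m + X 1 ^ m :
      MvPolynomial (Fin 2) (AlgebraicClosure (ZMod p)))
      = (X 0 - X 1) * toK p h := by
    have := congrArg (MvPolynomial.map (algebraMap (ZMod p) (AlgebraicClosure (ZMod p)))) hfh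
    simpa [fpoly, toK] using this
  have hmK : (m : AlgebraicClosure (ZMod p)) = 1 := by
    have h1' : (m : ZMod p) = 1 := by
      have := (ZMod.natCast_eq_natCast_iff m 1 p).mpr hm1; simpa using this
    rw [← map_natCast (algebraMap (ZMod p) (AlgebraicClosure (ZMod p))), h1', map_one]
  have hev := congrArg (MvPolynomial.eval ![x, y]) hF
  simp [h0] at hev
  have hdx := congrArg (fun g => MvPolynomial.eval ![x, y] (MvPolynomial.pderiv 0 g)) hF
  simp [MvPolynomial.pderiv_mul, MvPolynomial.pderiv_pow, MvPolynomial.pderiv_X,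
    h0, h1, hmK] at hdx
  have hdy := congrArg (fun g => MvPolynomial.eval ![x, y] (MvPolynomial.pderiv 1 g)) hF
  simp [MvPolynomial.pderiv_mul, MvPolynomial.pderiv_pow, MvPolynomial.pderiv_X,
    h0, h2, hmK] at hdy
  have hx : (x+1)^(m-1) = x^(m-1) := by linear_combination hdx
  have hy : (y+1)^(m-1) = y^(m-1) := by linear_combination -hdy
  refine ⟨hx, hy, ?_⟩
  obtain ⟨n, hn⟩ : ∃ n, m = n + 1 := ⟨m-1, by omega⟩
  subst hn
  simp only [Nat.add_sub_cancel] at hx hy ⊢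
  linear_combination hev - (x+1)*hx + (y+1)*hy

/-- Write `m - 1 = Σ_{j=1}^b m_j p^{i_j}` (base-`p` expansion, `i_1 = l`), and set
`k = (m-1)/p^l`.  Then `h` (defined by `f = (x-y)·h`) has at most
`(k-1)·(2k - (m_b+1)·p^{i_b - l})` singular points over the algebraic closure of `F_p`. -/
theorem stmt9 (p : ℕ) [Fact p.Prime] (hp : Odd p)
    (m l : ℕ) (hm : 3 ≤ m) (hm1 : m ≡ 1 [MOD p])
    (hl : p ^ l ∣ m - 1) (hl' : ¬ p ^ (l + 1) ∣ m - 1)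
    (h : MvPolynomial (Fin 2) (ZMod p))
    (hfh : fpoly p m = (X 0 - X 1) * h)
    (b : ℕ) (hb : 0 < b) (mj ij : Fin b → ℕ)
    (hmj : ∀ j, 1 ≤ mj j ∧ mj j ≤ p - 1)
    (hij : StrictMono ij) (hij0 : ij ⟨0, hb⟩ = l)
    (hexp : m - 1 = ∑ j, mj j * p ^ (ij j)) :
    {t : AlgebraicClosure (ZMod p) × AlgebraicClosure (ZMod p) |
        IsSingAt (toK p h) t.1 t.2}.Finite ∧
    ({t : AlgebraicClosure (ZMod p) × AlgebraicClosure (ZMod p) |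
        IsSingAt (toK p h) t.1 t.2}.ncard : ℤ) ≤
      ((m - 1) / p ^ l - 1) *
        (2 * ((m - 1) / p ^ l) - (mj ⟨b - 1, by omega⟩ + 1) * p ^ (ij ⟨b - 1, by omega⟩ - l)) := by
  classical
  have hp1 : 1 < p := (Fact.out : p.Prime).one_lt
  obtain ⟨k, hk⟩ := hl
  have hplpos : 0 < p ^ l := pow_pos (by omega) l
  have hk1 : 1 ≤ k := by
    rcases Nat.eq_zero_or_pos k with h0 | h0
    · rw [h0, mul_zero] at hk; omega
    · exact h0
  have hpk : ¬ p ∣ k := by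
    rintro ⟨c, hc⟩
    exact hl' ⟨c, by rw [hk, hc]; ring⟩
  have hdivk : (m - 1) / p ^ l = k := by rw [hk]; exact Nat.mul_div_cancel_left k hplpos
  set jb : Fin b := ⟨b - 1, by omega⟩ with hjb
  have hle0 : ∀ j : Fin b, l ≤ ij j := by
    intro j
    have h1 : ij ⟨0, hb⟩ ≤ ij j := hij.monotone (by simp [Fin.le_def])
    omega
  set e : Fin b → ℕ := fun j => ij j - l with he
  have hije : ∀ j, ij j = l + e j := by
    intro j; have := hle0 j; simp [he]; omega
  set q : Fin b → ℕ := fun j => p ^ e j with hq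
  have hq1 : ∀ j, 1 ≤ q j := fun j => Nat.one_le_pow (e j) p (by omega)
  have hksum : k = ∑ j, mj j * q j := by
    have h1 : (m - 1) = (∑ j, mj j * q j) * p ^ l := by
      rw [hexp, Finset.sum_mul]
      apply Finset.sum_congr rfl
      intro j _
      rw [hije j, pow_add, hq]; ring
    have h2 : (∑ j, mj j * q j) * p ^ l = k * p ^ l := by rw [← h1, hk]; ring
    exact (Nat.eq_of_mul_eq_mul_right hplpos h2).symm
  have hjbmem : jb ∈ (Finset.univ : Finset (Fin b)) := Finset.mem_univ _
  set r : ℕ := ∑ j ∈ Finset.univ.erase jb, mj j * q j with hr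
  have hkr : k = mj jb * q jb + r := by rw [hksum, ← Finset.add_sum_erase _ _ hjbmem]
  set Dn : ℕ := 2 * r + (mj jb - 1) * q jb with hDn
  -- the polynomial A and its root set
  set A : Polynomial (AlgebraicClosure (ZMod p)) :=
    (Polynomial.X + 1) ^ k - Polynomial.X ^ k with hA
  have hA0 : A ≠ 0 := by
    intro h0
    have := congrArg (Polynomial.eval 0) h0
    simp [hA, zero_pow (show k ≠ 0 by omega)] at this
  set Sfin := A.roots.toFinset with hSfin
  have hSmem : ∀ x : AlgebraicClosure (ZMod p), (x+1)^k = x^k → x ∈ Sfin := by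
    intro x hx
    rw [hSfin, Multiset.mem_toFinset, Polynomial.mem_roots']
    exact ⟨hA0, by simp [hA, Polynomial.IsRoot, sub_eq_zero, hx]⟩
  have hScard : Sfin.card ≤ k - 1 := aux_card_roots A (k-1) hA0 (aux_degA k)
  have hSnz : ∀ x ∈ Sfin, x ≠ 0 ∧ (x+1)^k = x^k := by
    intro x hx
    rw [hSfin, Multiset.mem_toFinset, Polynomial.mem_roots'] at hx
    have hx' : (x+1)^k = x^k := by
      have := hx.2
      simpa [hA, Polynomial.IsRoot, sub_eq_zero] using this
    refine ⟨?_, hx'⟩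
    intro h0
    rw [h0] at hx'
    simp [zero_pow (show k ≠ 0 by omega)] at hx'
  have hfrob : ∀ u v : AlgebraicClosure (ZMod p), u ^ (m-1) = v ^ (m-1) → u ^ k = v ^ k := by
    intro u v huv
    have hk' : k * p ^ l = m - 1 := by rw [hk]; ring
    have h1 : (u ^ k - v ^ k) ^ (p ^ l) = 0 := by
      rw [sub_pow_char_pow, ← pow_mul, ← pow_mul, hk', huv, sub_self]
    have h2 := pow_eq_zero_iff (show p ^ l ≠ 0 by positivity) |>.mp h1
    exact sub_eq_zero.mp h2
  have hsingcond : ∀ x y : AlgebraicClosure (ZMod p), IsSingAt (toK p h) x y →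
      x ∈ Sfin ∧ y ∈ Sfin ∧ x ^ k = y ^ k := by
    intro x y hs
    obtain ⟨hx, hy, hxy⟩ := aux_sing p m hm hm1 h hfh x y hs
    exact ⟨hSmem x (hfrob _ _ hx), hSmem y (hfrob _ _ hy), hfrob _ _ hxy⟩
  -- fibers
  set Fib : AlgebraicClosure (ZMod p) → Finset (AlgebraicClosure (ZMod p)) :=
    fun a => Sfin.filter (fun z => z ^ k = a ^ k) with hFibdef
  have hFibcard : ∀ a : AlgebraicClosure (ZMod p), (Fib a).card ≤ Dn := by
    intro a
    by_cases hb1 : b = 1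
    · subst hb1
      have her : (Finset.univ.erase jb : Finset (Fin 1)) = ∅ := by
        apply Finset.eq_empty_of_forall_notMem
        intro j hj
        exact (Finset.mem_erase.mp hj).1 (Subsingleton.elim j jb)
      have hr0 : r = 0 := by rw [hr, her, Finset.sum_empty]
      have hejb : e jb = 0 := by
        show ij jb - l = 0
        rw [show jb = ⟨0, hb⟩ from rfl, hij0, Nat.sub_self]
      have hqjb : q jb = 1 := by simp [hq, hejb]
      have hkm : k = mj jb := by rw [hkr, hr0, hqjb]; ring
      have hDk : Dn = k - 1 := by rw [hDn, hr0, hqjb, hkm]; omega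
      rw [hDk]
      exact le_trans (Finset.card_le_card (Finset.filter_subset _ _)) hScard
    · have h0mem : (⟨0, hb⟩ : Fin b) ∈ Finset.univ.erase jb := by
        rw [Finset.mem_erase]
        refine ⟨?_, Finset.mem_univ _⟩
        intro hcontr
        have := congrArg Fin.val hcontr
        simp [hjb] at this
        omega
      have hr1 : 1 ≤ r := by
        have h1 : 1 ≤ mj ⟨0, hb⟩ * q ⟨0, hb⟩ :=
          Nat.one_le_iff_ne_zero.mpr (Nat.mul_ne_zero (by have := (hmj ⟨0, hb⟩).1; omega)
            (by have := hq1 ⟨0, hb⟩; omega))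
        exact le_trans h1 (Finset.single_le_sum (f := fun j => mj j * q j)
          (fun i _ => Nat.zero_le _) h0mem)
      set c := (a ^ k)⁻¹ with hc
      set G : Polynomial (AlgebraicClosure (ZMod p)) :=
        (Polynomial.X ^ q jb - 1) ^ mj jb - Polynomial.X ^ (mj jb * q jb) with hG
      set P : Polynomial (AlgebraicClosure (ZMod p)) :=
        ∏ j ∈ Finset.univ.erase jb, (Polynomial.X ^ q j - 1) ^ mj j with hP
      set W : Polynomial (AlgebraicClosure (ZMod p)) :=
        (Polynomial.X ^ r * G + 1) * P - Polynomial.C c * Polynomial.X ^ r with hW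
      have hPe0 : Polynomial.eval 0 P ≠ 0 := by
        rw [hP, Polynomial.eval_prod, Finset.prod_ne_zero_iff]
        intro j _
        have h1 : Polynomial.eval 0 ((Polynomial.X ^ q j - 1) ^ mj j)
            = ((0:AlgebraicClosure (ZMod p)) ^ q j - 1) ^ mj j := by simp
        rw [h1, zero_pow (show q j ≠ 0 by have := hq1 j; omega)]
        exact pow_ne_zero _ (by norm_num)
      have hW0 : W ≠ 0 := by
        intro hzero
        have hev0 := congrArg (Polynomial.eval 0) hzero
        rw [hW] at hev0
        simp [zero_pow (show r ≠ 0 by omega)] at hev0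
        exact hPe0 hev0
      have hdegP : P.natDegree ≤ r := by
        rw [hP, hr]
        refine le_trans (Polynomial.natDegree_prod_le _ _) ?_
        apply Finset.sum_le_sum
        intro j hj
        refine le_trans Polynomial.natDegree_pow_le (Nat.mul_le_mul_left _ ?_)
        refine le_trans (Polynomial.natDegree_sub_le _ _) ?_
        simp [Polynomial.natDegree_X_pow]
      have hdegG : G.natDegree ≤ (mj jb - 1) * q jb := aux_degG (q jb) (mj jb)
      have hdegB : (Polynomial.X ^ r * G + 1).natDegree ≤ r + (mj jb - 1) * q jb := by
        refine le_trans (Polynomial.natDegree_add_le _ _) ?_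
        rw [Polynomial.natDegree_one]
        rw [max_le_iff]
        constructor
        · refine le_trans Polynomial.natDegree_mul_le ?_
          rw [Polynomial.natDegree_X_pow]
          exact Nat.add_le_add_left hdegG r
        · exact Nat.zero_le _
      have hWdeg : W.natDegree ≤ Dn := by
        rw [hW]
        refine le_trans (Polynomial.natDegree_sub_le _ _) ?_
        rw [max_le_iff]
        constructor
        · refine le_trans Polynomial.natDegree_mul_le ?_
          rw [hDn]
          have := Nat.add_le_add hdegB hdegP
          omega
        · refine le_trans Polynomial.natDegree_mul_le ?_
          rw [Polynomial.natDegree_C, Polynomial.natDegree_X_pow, hDn]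
          omega
      have hroot : ∀ z ∈ Fib a, (1 + z⁻¹) ∈ W.roots.toFinset := by
        intro z hz
        have hzS : z ∈ Sfin := (Finset.mem_filter.mp hz).1
        have hzk : z ^ k = a ^ k := (Finset.mem_filter.mp hz).2
        obtain ⟨hz0, hzroot⟩ := hSnz z hzS
        have hzk0 : z ^ k ≠ 0 := pow_ne_zero _ hz0
        have hxik : (1 + z⁻¹) ^ k = 1 := by
          have h1 : (1 + z⁻¹) = (z + 1) * z⁻¹ := by
            rw [add_mul, mul_inv_cancel₀ hz0, one_mul]
          rw [h1, mul_pow, hzroot, inv_pow, mul_inv_cancel₀ hzk0]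
        have hxi1 : (1 + z⁻¹) - 1 = z⁻¹ := by ring
        have hfull : ∏ j, ((1 + z⁻¹) ^ q j - 1) ^ mj j = c := by
          have h1 : ∀ j : Fin b, ((1 + z⁻¹) ^ q j - 1) ^ mj j
              = ((1 + z⁻¹) - 1) ^ (mj j * q j) := by
            intro j
            rw [mul_comm, pow_mul, hq]
            simp only []
            rw [sub_pow_char_pow, one_pow]
          rw [Finset.prod_congr rfl (fun j _ => h1 j), Finset.prod_pow_eq_pow_sum,
            ← hksum, hxi1, inv_pow, hzk, hc]
        have hsplit : ((1 + z⁻¹) ^ q jb - 1) ^ mj jb *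
            ∏ j ∈ Finset.univ.erase jb, ((1 + z⁻¹) ^ q j - 1) ^ mj j = c := by
          rw [Finset.mul_prod_erase Finset.univ (fun j => ((1 + z⁻¹) ^ q j - 1) ^ mj j) hjbmem]
          exact hfull
        have hone : (1 + z⁻¹) ^ (mj jb * q jb) * (1 + z⁻¹) ^ r = 1 := by
          rw [← pow_add, ← hkr, hxik]
        rw [Multiset.mem_toFinset, Polynomial.mem_roots']
        refine ⟨hW0, ?_⟩
        show Polynomial.eval (1 + z⁻¹) W = 0
        rw [hW, hG, hP]
        simp only [Polynomial.eval_sub, Polynomial.eval_mul, Polynomial.eval_add,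
          Polynomial.eval_pow, Polynomial.eval_one, Polynomial.eval_X, Polynomial.eval_C,
          Polynomial.eval_prod]
        linear_combination ((1 + z⁻¹) ^ r) * hsplit -
          (∏ j ∈ Finset.univ.erase jb, ((1 + z⁻¹) ^ q j - 1) ^ mj j) * hone
      have hinj : Set.InjOn (fun z : AlgebraicClosure (ZMod p) => 1 + z⁻¹) ↑(Fib a) := by
        intro z1 _ z2 _ heq
        have : z1⁻¹ = z2⁻¹ := by
          simpa using heq
        exact inv_injective this
      calc (Fib a).card ≤ W.roots.toFinset.card :=
            Finset.card_le_card_of_injOn _ hroot hinj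
        _ ≤ Dn := aux_card_roots W Dn hW0 hWdeg
  -- total set
  set Tfin := Sfin.biUnion (fun a => (Fib a).image (fun z => (a, z))) with hT
  have hsub : {t : AlgebraicClosure (ZMod p) × AlgebraicClosure (ZMod p) |
      IsSingAt (toK p h) t.1 t.2} ⊆ ↑Tfin := by
    rintro ⟨x, y⟩ hxy
    obtain ⟨hxS, hyS, hk'⟩ := hsingcond x y hxy
    refine Finset.mem_coe.mpr (Finset.mem_biUnion.mpr ⟨x, hxS, Finset.mem_image.mpr ⟨y, ?_, rfl⟩⟩)
    exact Finset.mem_filter.mpr ⟨hyS, hk'.symm⟩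
  have hfin : {t : AlgebraicClosure (ZMod p) × AlgebraicClosure (ZMod p) |
      IsSingAt (toK p h) t.1 t.2}.Finite := Set.Finite.subset (Tfin.finite_toSet) hsub
  refine ⟨hfin, ?_⟩
  have hcard1 : {t : AlgebraicClosure (ZMod p) × AlgebraicClosure (ZMod p) |
      IsSingAt (toK p h) t.1 t.2}.ncard ≤ Tfin.card := by
    rw [← Set.ncard_coe_finset]
    exact Set.ncard_le_ncard hsub (Tfin.finite_toSet)
  have hTcard : Tfin.card ≤ (k - 1) * Dn := by
    calc Tfin.card ≤ ∑ a ∈ Sfin, ((Fib a).image (fun z => (a, z))).card :=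
          Finset.card_biUnion_le
      _ ≤ ∑ a ∈ Sfin, Dn :=
          Finset.sum_le_sum (fun a _ => le_trans Finset.card_image_le (hFibcard a))
      _ = Sfin.card * Dn := by rw [Finset.sum_const, smul_eq_mul]
      _ ≤ (k - 1) * Dn := Nat.mul_le_mul_right _ hScard
  have hdivZ : ((m : ℤ) - 1) / (p : ℤ) ^ l = (k : ℤ) := by
    have h1 : ((m : ℤ) - 1) = (k : ℤ) * (p : ℤ) ^ l := by
      have h2 := congrArg (fun n : ℕ => (n : ℤ)) hk
      simp only [Nat.cast_sub (show 1 ≤ m by omega), Nat.cast_mul, Nat.cast_pow,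
        Nat.cast_one] at h2
      rw [h2]; ring
    rw [h1, Int.mul_ediv_cancel _ (by positivity : ((p:ℤ))^l ≠ 0)]
  rw [hdivZ]
  have hq' : ((q jb : ℕ) : ℤ) = (p:ℤ) ^ (ij jb - l) := by
    rw [hq]; push_cast; rfl
  have hkrZ : (k : ℤ) = (mj jb : ℤ) * (q jb : ℤ) + (r : ℤ) := by exact_mod_cast hkr
  have hDnZ : ((Dn : ℕ) : ℤ) = 2 * (k:ℤ) - ((mj jb : ℤ) + 1) * (p:ℤ) ^ (ij jb - l) := by
    rw [← hq', hDn]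
    push_cast [Nat.cast_sub (hmj jb).1]
    linarith [hkrZ]
  have hfinal : (((k - 1) * Dn : ℕ) : ℤ)
      = ((k:ℤ) - 1) * (2 * (k:ℤ) - ((mj jb : ℤ) + 1) * (p:ℤ) ^ (ij jb - l)) := by
    rw [Nat.cast_mul, Nat.cast_sub hk1, hDnZ]
    push_cast
    ring
  calc ({t : AlgebraicClosure (ZMod p) × AlgebraicClosure (ZMod p) |
      IsSingAt (toK p h) t.1 t.2}.ncard : ℤ) ≤ (((k - 1) * Dn : ℕ) : ℤ) := by
        exact_mod_cast le_trans hcard1 hTcard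
    _ = _ := hfinal
end

section
/- Let K be an algebraic closure of F_p. Among the singular points t = (x₀,y₀) ∈ K² of h with x₀ = y₀: (a) those with x₀ ∈ F_{p^l} \ {0} have multiplicity m_t(h) = p^l (and m_t(f) = p^l + 1), and there are at most d − 1 of them; (b) those with x₀ ∉ F_{p^l} have multiplicity m_t(h) = p^l − 1 (and m_t(f) = p^l), and there are at most (m−1)/p^l − d of them. -/
open MvPolynomial

section Aux
variable {K : Type*} [CommRing K]

lemma degree_single'' {σ : Type*} (i : σ) (k : ℕ) : (Finsupp.single i k).degree = k := by
  classical
  rw [Finsupp.degree_apply]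
  rcases eq_or_ne k 0 with rfl | hk
  · simp
  · rw [Finsupp.support_single_ne_zero _ hk, Finset.sum_singleton, Finsupp.single_eq_same]

lemma homComp_aeval (P : Polynomial K) (i : Fin 2) (n : ℕ) :
    homogeneousComponent n (Polynomial.aeval (X i : MvPolynomial (Fin 2) K) P)
      = C (P.coeff n) * X i ^ n := by
  induction P using Polynomial.induction_on' with
  | add p q hp hq => rw [map_add, map_add, Polynomial.coeff_add, map_add, add_mul, hp, hq]
  | monomial k c =>
    rw [Polynomial.aeval_monomial, Polynomial.coeff_monomial, MvPolynomial.algebraMap_eq,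
      C_mul_X_pow_eq_monomial, homogeneousComponent_of_mem
      ((mem_homogeneousSubmodule _ _).2 (isHomogeneous_monomial c (degree_single'' i k)))]
    split_ifs with h2 h3 h3
    · rw [← C_mul_X_pow_eq_monomial, h3]
    · exact absurd h2.symm h3
    · exact absurd h3.symm h2
    · rw [map_zero, zero_mul]

lemma homComp_one_mul {φ : MvPolynomial (Fin 2) K} (hφ : φ.IsHomogeneous 1)
    (H : MvPolynomial (Fin 2) K) (n : ℕ) :
    homogeneousComponent (n + 1) (φ * H) = φ * homogeneousComponent n H := by
  have key : ∀ d c, homogeneousComponent (n + 1) (φ * monomial d c)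
      = φ * homogeneousComponent n (monomial d c) := by
    intro d c
    rw [homogeneousComponent_of_mem ((mem_homogeneousSubmodule _ _).2
      (hφ.mul (isHomogeneous_monomial c (n := d.degree) rfl))),
      homogeneousComponent_of_mem ((mem_homogeneousSubmodule _ _).2
      (isHomogeneous_monomial c (n := d.degree) rfl))]
    split_ifs with h1 h2 h2
    · rfl
    · omega
    · omega
    · rw [mul_zero]
  calc homogeneousComponent (n + 1) (φ * H)
      = homogeneousComponent (n + 1) (∑ d ∈ H.support, φ * monomial d (coeff d H)) := by
        rw [← Finset.mul_sum, ← H.as_sum]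
    _ = ∑ d ∈ H.support, φ * homogeneousComponent n (monomial d (coeff d H)) := by
        rw [map_sum]; exact Finset.sum_congr rfl fun d _ => key d _
    _ = φ * homogeneousComponent n H := by
        rw [← Finset.mul_sum, ← map_sum]
        exact congrArg _ (congrArg _ (H.as_sum).symm)

end Aux

section PolyAux
variable {K : Type*} [Field K]

lemma frobinj (p : ℕ) [Fact p.Prime] [CharP K p] (l : ℕ) {x y : K}
    (h : x ^ p ^ l = y ^ p ^ l) : x = y := by
  have h2 : (x - y) ^ p ^ l = 0 := by rw [sub_pow_char_pow, h, sub_self]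
  have h3 : x - y = 0 := pow_eq_zero_iff (pow_ne_zero l (Fact.out : p.Prime).ne_zero) |>.mp h2
  exact sub_eq_zero.mp h3

lemma pow_expand (p : ℕ) [Fact p.Prime] [CharP K p] (l u : ℕ) (b : K) :
    (Polynomial.X + Polynomial.C b) ^ (p ^ l * u + 1)
      = (Polynomial.X + Polynomial.C b) *
        Polynomial.expand K (p ^ l) ((Polynomial.X + Polynomial.C (b ^ p ^ l)) ^ u) := by
  rw [pow_succ', pow_mul, add_pow_char_pow, map_pow, map_add, Polynomial.expand_X,
    Polynomial.expand_C, ← Polynomial.C_pow]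

lemma coeff_expandpow (q u : ℕ) (hq : 0 < q) (b : K) (n : ℕ) :
    (Polynomial.expand K q ((Polynomial.X + Polynomial.C b) ^ u)).coeff n
      = if q ∣ n then b ^ (u - n / q) * (u.choose (n / q) : K) else 0 := by
  rw [Polynomial.coeff_expand hq]
  split_ifs with hd
  · rw [Polynomial.coeff_X_add_C_pow]
  · rfl

lemma coeff_mul_X_add_C (b : K) (Q : Polynomial K) (n : ℕ) (hn : n ≠ 0) :
    ((Polynomial.X + Polynomial.C b) * Q).coeff n = Q.coeff (n - 1) + b * Q.coeff n := by
  rw [add_mul, Polynomial.coeff_add, Polynomial.coeff_C_mul]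
  obtain ⟨k, rfl⟩ : ∃ k, n = k + 1 := ⟨n - 1, by omega⟩
  rw [Polynomial.coeff_X_mul]
  simp

lemma coeffP (p : ℕ) [Fact p.Prime] [CharP K p] (l u : ℕ) (a : K) (n : ℕ) (hn : 1 ≤ n) :
    (((Polynomial.X + Polynomial.C (a + 1)) ^ (p ^ l * u + 1)
      - (Polynomial.X + Polynomial.C a) ^ (p ^ l * u + 1)).coeff n)
    = ((if p ^ l ∣ (n - 1) then ((a + 1) ^ p ^ l) ^ (u - (n - 1) / p ^ l)
          * (u.choose ((n - 1) / p ^ l) : K) else 0)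
        + (a + 1) * (if p ^ l ∣ n then ((a + 1) ^ p ^ l) ^ (u - n / p ^ l)
          * (u.choose (n / p ^ l) : K) else 0))
      - ((if p ^ l ∣ (n - 1) then (a ^ p ^ l) ^ (u - (n - 1) / p ^ l)
          * (u.choose ((n - 1) / p ^ l) : K) else 0)
        + a * (if p ^ l ∣ n then (a ^ p ^ l) ^ (u - n / p ^ l)
          * (u.choose (n / p ^ l) : K) else 0)) := by
  have hq : 0 < p ^ l := pow_pos (Fact.out : p.Prime).pos l
  rw [Polynomial.coeff_sub, pow_expand p l u (a + 1), pow_expand p l u a,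
    coeff_mul_X_add_C _ _ _ (by omega), coeff_mul_X_add_C _ _ _ (by omega),
    coeff_expandpow _ _ hq, coeff_expandpow _ _ hq, coeff_expandpow _ _ hq,
    coeff_expandpow _ _ hq]

end PolyAux

section ShiftAux
variable {K : Type*} [CommRing K]

lemma shift_fpolyK (m : ℕ) (a : K) :
    shiftAt ((X 0 + 1) ^ m - X 0 ^ m - (X 1 + 1) ^ m + X 1 ^ m : MvPolynomial (Fin 2) K) a a
      = Polynomial.aeval (X 0 : MvPolynomial (Fin 2) K)
          ((Polynomial.X + Polynomial.C (a + 1)) ^ m - (Polynomial.X + Polynomial.C a) ^ m)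
        - Polynomial.aeval (X 1 : MvPolynomial (Fin 2) K)
          ((Polynomial.X + Polynomial.C (a + 1)) ^ m - (Polynomial.X + Polynomial.C a) ^ m) := by
  simp only [shiftAt, map_add, map_sub, map_pow, map_one, aeval_X, Matrix.cons_val_zero,
    Matrix.cons_val_one, Matrix.head_cons, Polynomial.aeval_X, Polynomial.aeval_C,
    algebraMap_eq, C_add, C_1]
  ring

lemma comp_shift_fpolyK (m : ℕ) (a : K) (n : ℕ) :
    homogeneousComponent n
      (shiftAt ((X 0 + 1) ^ m - X 0 ^ m - (X 1 + 1) ^ m + X 1 ^ m : MvPolynomial (Fin 2) K) a a)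
      = C (((Polynomial.X + Polynomial.C (a + 1)) ^ m
            - (Polynomial.X + Polynomial.C a) ^ m).coeff n) * X 0 ^ n
        - C (((Polynomial.X + Polynomial.C (a + 1)) ^ m
            - (Polynomial.X + Polynomial.C a) ^ m).coeff n) * X 1 ^ n := by
  rw [shift_fpolyK, map_sub, homComp_aeval, homComp_aeval]

lemma XsubY_ne_zero [Nontrivial K] : (X 0 - X 1 : MvPolynomial (Fin 2) K) ≠ 0 := by
  intro hc
  have := congrArg (coeff (Finsupp.single 0 1)) hc
  rw [coeff_sub, coeff_zero] at this
  rw [X, X, coeff_monomial, coeff_monomial, if_pos rfl, if_neg] at this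
  · simp at this
  · intro hs
    have := DFunLike.congr_fun hs 0
    simp [Finsupp.single_apply] at this

lemma diag_comp_ne_zero [Nontrivial K] {c : K} (hc : c ≠ 0) {n : ℕ} (hn : 1 ≤ n) :
    (C c * X 0 ^ n - C c * X 1 ^ n : MvPolynomial (Fin 2) K) ≠ 0 := by
  intro hzero
  have := congrArg (coeff (Finsupp.single 0 n)) hzero
  rw [coeff_sub, coeff_zero, C_mul_X_pow_eq_monomial, C_mul_X_pow_eq_monomial,
    coeff_monomial, coeff_monomial, if_pos rfl, if_neg] at this
  · rw [sub_zero] at this; exact hc this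
  · intro hs
    have := DFunLike.congr_fun hs 0
    simp [Finsupp.single_apply] at this
    omega

lemma natInf_eq {S : Set ℕ} {n : ℕ} (h1 : n ∈ S) (h2 : ∀ k, k < n → k ∉ S) : sInf S = n :=
  le_antisymm (Nat.sInf_le h1)
    (le_csInf ⟨n, h1⟩ fun k hk => le_of_not_gt fun hlt => h2 k hlt hk)

end ShiftAux

section MultMain
variable {K : Type*} [Field K]

lemma mult_main (p : ℕ) [Fact p.Prime] [CharP K p] (l u : ℕ)
    (hl : 1 ≤ l) (hpu : ¬ p ∣ u) (hu1 : 1 ≤ u) {a : K} (ha : a ≠ 0)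
    (E : (a + 1) ^ (p ^ l * u) = a ^ (p ^ l * u))
    (Fm Hm : MvPolynomial (Fin 2) K)
    (hF : Fm = (X 0 + 1) ^ (p ^ l * u + 1) - X 0 ^ (p ^ l * u + 1)
          - (X 1 + 1) ^ (p ^ l * u + 1) + X 1 ^ (p ^ l * u + 1))
    (hFH : Fm = (X 0 - X 1) * Hm) :
    (a ^ p ^ l = a → multAt Hm a a = p ^ l ∧ multAt Fm a a = p ^ l + 1) ∧
    (a ^ p ^ l ≠ a → multAt Hm a a = p ^ l - 1 ∧ multAt Fm a a = p ^ l) := by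
  have hp' : p.Prime := Fact.out
  have hq2 : 2 ≤ p ^ l := le_trans hp'.two_le (Nat.le_self_pow (by omega) p)
  have hq0 : 0 < p ^ l := by omega
  have hqu0 : p ^ l * u ≠ 0 := by positivity
  -- basic algebraic facts
  have hA : a + 1 ≠ 0 := by
    intro h0
    rw [h0, zero_pow hqu0] at E
    exact pow_ne_zero _ ha E.symm
  have hAa : a + 1 ≠ a := by
    intro hh
    exact one_ne_zero (add_left_cancel (hh.trans (add_zero a).symm))
  have hAu : (a + 1) ^ u = a ^ u :=
    frobinj p l (by rw [← pow_mul, ← pow_mul, mul_comm u (p ^ l)]; exact E)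
  have hu2 : 2 ≤ u := by
    by_contra hcon
    have : u = 1 := by omega
    rw [this, pow_one, pow_one] at hAu
    exact hAa hAu
  have hA1ne : (a + 1) ^ (u - 1) ≠ a ^ (u - 1) := by
    intro hh
    apply hAa
    have h1 : (a + 1) ^ (u - 1) * (a + 1) = a ^ (u - 1) * a := by
      rw [← pow_succ, ← pow_succ, Nat.sub_add_cancel hu1]; exact hAu
    rw [hh] at h1
    exact mul_left_cancel₀ (pow_ne_zero _ ha) h1
  have hbeta : (a + 1) ^ (p ^ l * (u - 1)) ≠ a ^ (p ^ l * (u - 1)) := by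
    intro hh
    exact hA1ne (frobinj p l (by rw [← pow_mul, ← pow_mul, mul_comm (u - 1) (p ^ l)]; exact hh))
  have huK : (u : K) ≠ 0 := fun hc => hpu ((CharP.cast_eq_zero_iff K p u).1 hc)
  -- the one-variable polynomial P and components of the shift of Fm
  set P : Polynomial K := (Polynomial.X + Polynomial.C (a + 1)) ^ (p ^ l * u + 1)
      - (Polynomial.X + Polynomial.C a) ^ (p ^ l * u + 1) with hP
  have compF : ∀ n, homogeneousComponent n (shiftAt Fm a a)
      = C (P.coeff n) * X 0 ^ n - C (P.coeff n) * X 1 ^ n := by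
    intro n
    rw [hF]
    exact comp_shift_fpolyK _ a n
  -- coefficient values
  have c1 : P.coeff 1 = 0 := by
    rw [hP, coeffP p l u a 1 le_rfl]
    have hd1 : p ^ l ∣ 1 - 1 := dvd_zero _
    have hnd : ¬ p ^ l ∣ 1 := fun hd => absurd (Nat.le_of_dvd one_pos hd) (by omega)
    simp only [if_pos hd1, if_neg hnd]
    simp only [Nat.sub_self, Nat.zero_div, Nat.sub_zero, Nat.choose_zero_right, Nat.cast_one, mul_one,
      mul_zero, add_zero]
    rw [← pow_mul, ← pow_mul, E, sub_self]
  have cmid : ∀ n, 2 ≤ n → n ≤ p ^ l - 1 → P.coeff n = 0 := by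
    intro n h2 h3
    have hnd : ¬ p ^ l ∣ n := fun hd => absurd (Nat.le_of_dvd (by omega) hd) (by omega)
    have hnd1 : ¬ p ^ l ∣ (n - 1) := fun hd => absurd (Nat.le_of_dvd (by omega) hd) (by omega)
    rw [hP, coeffP p l u a n (by omega)]
    simp only [if_neg hnd1, if_neg hnd]
    ring
  have cq : P.coeff (p ^ l) = (u : K) *
      ((a + 1) * (a + 1) ^ (p ^ l * (u - 1)) - a * a ^ (p ^ l * (u - 1))) := by
    have hnd1 : ¬ p ^ l ∣ (p ^ l - 1) := fun hd => absurd (Nat.le_of_dvd (by omega) hd) (by omega)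
    rw [hP, coeffP p l u a (p ^ l) (by omega)]
    simp only [if_neg hnd1, if_pos (dvd_refl (p ^ l)), Nat.div_self hq0, Nat.choose_one_right]
    rw [← pow_mul, ← pow_mul]
    ring
  have cq1 : P.coeff (p ^ l + 1) = (u : K) *
      ((a + 1) ^ (p ^ l * (u - 1)) - a ^ (p ^ l * (u - 1))) := by
    have hd1 : p ^ l + 1 - 1 = p ^ l := by omega
    have hnd : ¬ p ^ l ∣ (p ^ l + 1) := by
      intro hd
      have := (Nat.dvd_add_right dvd_rfl).mp hd
      exact absurd (Nat.le_of_dvd one_pos this) (by omega)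
    rw [hP, coeffP p l u a (p ^ l + 1) (by omega), hd1]
    simp only [if_pos (dvd_refl (p ^ l)), if_neg hnd, Nat.div_self hq0, Nat.choose_one_right]
    rw [← pow_mul, ← pow_mul]
    ring
  -- shift of Hm
  have hshift : shiftAt Fm a a = (X 0 - X 1) * shiftAt Hm a a := by
    rw [hFH]
    unfold shiftAt
    rw [map_mul]
    congr 1
    simp only [map_sub, aeval_X, Matrix.cons_val_zero, Matrix.cons_val_one, Matrix.head_cons]
    ring
  have hXY : (X 0 - X 1 : MvPolynomial (Fin 2) K).IsHomogeneous 1 :=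
    (isHomogeneous_X _ _).sub (isHomogeneous_X _ _)
  have compH : ∀ n, homogeneousComponent (n + 1) (shiftAt Fm a a)
      = (X 0 - X 1) * homogeneousComponent n (shiftAt Hm a a) := by
    intro n
    rw [hshift]
    exact homComp_one_mul hXY _ n
  -- vanishing below p^l
  have vanish : ∀ k, k < p ^ l → homogeneousComponent k (shiftAt Fm a a) = 0 := by
    intro k hk
    obtain rfl | hk0 := eq_or_ne k 0
    · rw [compF]
      rw [pow_zero, pow_zero, sub_self]
    · have hc : P.coeff k = 0 := by
        rcases eq_or_ne k 1 with rfl | hk1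
        · exact c1
        · exact cmid k (by omega) (by omega)
      rw [compF, hc, map_zero, zero_mul, zero_mul, sub_self]
  refine ⟨fun haq => ?_, fun haq => ?_⟩
  · -- case (a) : a ∈ F_{p^l}
    have hAq' : (a + 1) ^ p ^ l = a + 1 := by rw [add_pow_char_pow, haq, one_pow]
    have cqa : P.coeff (p ^ l) = 0 := by
      rw [cq, pow_mul, pow_mul, hAq', haq, ← pow_succ', ← pow_succ',
        Nat.sub_add_cancel hu1, hAu, sub_self, mul_zero]
    have cq1a : P.coeff (p ^ l + 1) ≠ 0 := by
      rw [cq1]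
      exact mul_ne_zero huK (sub_ne_zero.2 hbeta)
    have hFne : homogeneousComponent (p ^ l + 1) (shiftAt Fm a a) ≠ 0 := by
      rw [compF]
      exact diag_comp_ne_zero cq1a (by omega)
    have vanish' : ∀ k, k < p ^ l + 1 → homogeneousComponent k (shiftAt Fm a a) = 0 := by
      intro k hk
      rcases eq_or_ne k (p ^ l) with rfl | hkq
      · rw [compF, cqa, map_zero, zero_mul, zero_mul, sub_self]
      · exact vanish k (by omega)
    constructor
    · unfold multAt
      refine natInf_eq ?_ ?_
      · intro h0
        exact hFne (by rw [compH, h0, mul_zero])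
      · intro k hk hmem
        apply hmem
        have h0 : homogeneousComponent (k + 1) (shiftAt Fm a a) = 0 := vanish' (k + 1) (by omega)
        rw [compH] at h0
        exact (mul_eq_zero.mp h0).resolve_left XsubY_ne_zero
    · unfold multAt
      exact natInf_eq hFne fun k hk hmem => hmem (vanish' k hk)
  · -- case (b) : a ∉ F_{p^l}
    have halpha : (a + 1) * (a + 1) ^ (p ^ l * (u - 1)) ≠ a * a ^ (p ^ l * (u - 1)) := by
      intro hcon
      apply haq
      have hs0 : (a + 1) ^ (p ^ l * (u - 1)) ≠ 0 := pow_ne_zero _ hA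
      have hAqq : (a + 1) ^ p ^ l = a ^ p ^ l + 1 := by rw [add_pow_char_pow, one_pow]
      have hsplit : p ^ l * u = p ^ l + p ^ l * (u - 1) := by
        conv_lhs => rw [← Nat.sub_add_cancel hu1]
        rw [Nat.mul_succ, Nat.add_comm]
      have hEq : (a + 1) ^ p ^ l * (a + 1) ^ (p ^ l * (u - 1))
          = a ^ p ^ l * a ^ (p ^ l * (u - 1)) := by
        rw [← pow_add, ← pow_add, ← hsplit]; exact E
      have key : (a ^ p ^ l * (a + 1)) * (a + 1) ^ (p ^ l * (u - 1))
          = (a * (a + 1) ^ p ^ l) * (a + 1) ^ (p ^ l * (u - 1)) := by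
        calc (a ^ p ^ l * (a + 1)) * (a + 1) ^ (p ^ l * (u - 1))
            = a ^ p ^ l * ((a + 1) * (a + 1) ^ (p ^ l * (u - 1))) := by ring
          _ = a ^ p ^ l * (a * a ^ (p ^ l * (u - 1))) := by rw [hcon]
          _ = a * (a ^ p ^ l * a ^ (p ^ l * (u - 1))) := by ring
          _ = a * ((a + 1) ^ p ^ l * (a + 1) ^ (p ^ l * (u - 1))) := by rw [hEq]
          _ = (a * (a + 1) ^ p ^ l) * (a + 1) ^ (p ^ l * (u - 1)) := by ring
      have key2 : a ^ p ^ l * (a + 1) = a * (a + 1) ^ p ^ l := mul_right_cancel₀ hs0 key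
      rw [hAqq] at key2
      linear_combination key2
    have cqb : P.coeff (p ^ l) ≠ 0 := by
      rw [cq]
      exact mul_ne_zero huK (sub_ne_zero.2 halpha)
    have hFne : homogeneousComponent (p ^ l) (shiftAt Fm a a) ≠ 0 := by
      rw [compF]
      exact diag_comp_ne_zero cqb (by omega)
    constructor
    · unfold multAt
      refine natInf_eq ?_ ?_
      · intro h0
        apply hFne
        have : p ^ l - 1 + 1 = p ^ l := by omega
        rw [← this, compH, h0, mul_zero]
      · intro k hk hmem
        apply hmem
        have h0 : homogeneousComponent (k + 1) (shiftAt Fm a a) = 0 := vanish (k + 1) (by omega)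
        rw [compH] at h0
        exact (mul_eq_zero.mp h0).resolve_left XsubY_ne_zero
    · unfold multAt
      exact natInf_eq hFne fun k hk hmem => hmem (vanish k hk)

end MultMain

/-- Singular points `t = (x₀,x₀)` of `h` on the diagonal: (a) those with
`x₀ ∈ F_{p^l} \ {0}` have `m_t(h) = p^l` and `m_t(f) = p^l + 1`, and there are at most
`d - 1` of them; (b) those with `x₀ ∉ F_{p^l}` have `m_t(h) = p^l - 1` and `m_t(f) = p^l`,
and there are at most `(m-1)/p^l - d` of them.  (Membership of `x₀` in the subfield
`F_{p^l}` of the algebraic closure is expressed by `x₀^{p^l} = x₀`.) -/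
theorem stmt10 (p : ℕ) [Fact p.Prime] (hp : Odd p)
    (m l : ℕ) (hm : 3 ≤ m) (hm1 : m ≡ 1 [MOD p])
    (hl : p ^ l ∣ m - 1) (hl' : ¬ p ^ (l + 1) ∣ m - 1)
    (h : MvPolynomial (Fin 2) (ZMod p))
    (hfh : fpoly p m = (X 0 - X 1) * h) :
    (∀ x0 : AlgebraicClosure (ZMod p), IsSingAt (toK p h) x0 x0 →
      x0 ^ p ^ l = x0 → x0 ≠ 0 →
        multAt (toK p h) x0 x0 = p ^ l ∧ multAt (toK p (fpoly p m)) x0 x0 = p ^ l + 1) ∧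
    ({x0 : AlgebraicClosure (ZMod p) |
        IsSingAt (toK p h) x0 x0 ∧ x0 ^ p ^ l = x0 ∧ x0 ≠ 0}.Finite ∧
      {x0 : AlgebraicClosure (ZMod p) |
        IsSingAt (toK p h) x0 x0 ∧ x0 ^ p ^ l = x0 ∧ x0 ≠ 0}.ncard ≤
          Nat.gcd (m - 1) (p ^ l - 1) - 1) ∧
    (∀ x0 : AlgebraicClosure (ZMod p), IsSingAt (toK p h) x0 x0 →
      x0 ^ p ^ l ≠ x0 →
        multAt (toK p h) x0 x0 = p ^ l - 1 ∧ multAt (toK p (fpoly p m)) x0 x0 = p ^ l) ∧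
    ({x0 : AlgebraicClosure (ZMod p) |
        IsSingAt (toK p h) x0 x0 ∧ x0 ^ p ^ l ≠ x0}.Finite ∧
      {x0 : AlgebraicClosure (ZMod p) |
        IsSingAt (toK p h) x0 x0 ∧ x0 ^ p ^ l ≠ x0}.ncard ≤
          (m - 1) / p ^ l - Nat.gcd (m - 1) (p ^ l - 1)) := by
  have hp' : p.Prime := Fact.out
  set K := AlgebraicClosure (ZMod p) with hK
  -- numerics
  have hl1 : 1 ≤ l := by
    by_contra hc
    have hl0 : l = 0 := by omega
    apply hl'
    rw [hl0, zero_add, pow_one]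
    exact (Nat.modEq_iff_dvd' (by omega)).1 hm1.symm
  obtain ⟨u, hmu⟩ := hl
  have hq2 : 2 ≤ p ^ l := le_trans hp'.two_le (Nat.le_self_pow (by omega) p)
  have hq0 : 0 < p ^ l := by omega
  have hu1 : 1 ≤ u := by
    rcases Nat.eq_zero_or_pos u with rfl | hpos
    · simp at hmu; omega
    · exact hpos
  have hpu : ¬ p ∣ u := by
    rintro ⟨v, rfl⟩
    exact hl' ⟨v, by rw [hmu, pow_succ]; ring⟩
  have hdivu : (m - 1) / p ^ l = u := by rw [hmu]; exact Nat.mul_div_cancel_left u hq0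
  have hm' : p ^ l * u + 1 = m := by omega
  -- base polynomials over K
  have hFK : toK p (fpoly p m)
      = (X 0 + 1) ^ m - X 0 ^ m - (X 1 + 1) ^ m + X 1 ^ m := by
    simp [toK, fpoly]
  have hFHK : toK p (fpoly p m) = (X 0 - X 1) * toK p h := by
    rw [toK, hfh, map_mul]
    congr 1
    rw [map_sub, map_X, map_X]
  have hmK : ((m : K)) = 1 := by
    have h1 : ((m : ZMod p)) = ((1 : ℕ) : ZMod p) := (ZMod.natCast_eq_natCast_iff m 1 p).mpr hm1
    calc (m : K) = algebraMap (ZMod p) K ((m : ZMod p)) :=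
          (map_natCast (algebraMap (ZMod p) K) m).symm
      _ = algebraMap (ZMod p) K 1 := by rw [h1, Nat.cast_one]
      _ = 1 := map_one _
  -- singularity gives the key equation
  have hsing : ∀ a : K, IsSingAt (toK p h) a a → (a + 1) ^ (p ^ l * u) = a ^ (p ^ l * u) := by
    intro a hs
    have h0 : eval ![a, a] (toK p h) = 0 := hs.1
    have hd0 : eval ![a, a] (pderiv 0 (toK p (fpoly p m))) = eval ![a, a] (toK p h) := by
      rw [hFHK, pderiv_mul]
      simp [pderiv_X_self, pderiv_X_of_ne (show (1 : Fin 2) ≠ 0 by decide)]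
    have hd1 : eval ![a, a] (pderiv 0 (toK p (fpoly p m)))
        = (a + 1) ^ (m - 1) - a ^ (m - 1) := by
      rw [hFK]
      simp only [map_add, map_sub, pderiv_pow, pderiv_X_self, pderiv_one,
        pderiv_X_of_ne (show (1 : Fin 2) ≠ 0 by decide), add_zero, mul_one, mul_zero,
        sub_zero, zero_add]
      simp only [map_sub, map_mul, map_add, map_pow, eval_X, map_one, map_natCast,
        Matrix.cons_val_zero, add_zero]
      rw [hmK]
      ring
    have E' : (a + 1) ^ (m - 1) - a ^ (m - 1) = 0 := by rw [← hd1, hd0, h0]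
    have E'' : (a + 1) ^ (m - 1) = a ^ (m - 1) := sub_eq_zero.mp E'
    rw [← hmu]
    exact E''
  -- the multiplicity machine
  have hmm : ∀ a : K, IsSingAt (toK p h) a a → a ≠ 0 →
      (a ^ p ^ l = a → multAt (toK p h) a a = p ^ l ∧
        multAt (toK p (fpoly p m)) a a = p ^ l + 1) ∧
      (a ^ p ^ l ≠ a → multAt (toK p h) a a = p ^ l - 1 ∧
        multAt (toK p (fpoly p m)) a a = p ^ l) := by
    intro a hs ha
    exact mult_main p l u hl1 hpu hu1 ha (hsing a hs) _ _ (by rw [hFK, hm']) hFHK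
  -- counting
  have hone : ∀ a : K, a + 1 ≠ a := by
    intro a hh
    exact one_ne_zero (add_left_cancel (hh.trans (add_zero a).symm))
  set dd := Nat.gcd (m - 1) (p ^ l - 1) with hdd
  have hd0 : 0 < dd := Nat.gcd_pos_of_pos_right _ (by omega)
  have hinj : ∀ S : Set K, (∀ x ∈ S, x ≠ 0) → Set.InjOn (fun x0 : K => (x0 + 1) / x0) S := by
    intro S hS x hx y hy hxy
    have hx0 := hS x hx
    have hy0 := hS y hy
    simp only at hxy
    rw [div_eq_div_iff hx0 hy0] at hxy
    linear_combination -hxy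
  have countA : {x0 : K | IsSingAt (toK p h) x0 x0 ∧ x0 ^ p ^ l = x0 ∧ x0 ≠ 0}.Finite ∧
      {x0 : K | IsSingAt (toK p h) x0 x0 ∧ x0 ^ p ^ l = x0 ∧ x0 ≠ 0}.ncard ≤ dd - 1 := by
    set Sa := {x0 : K | IsSingAt (toK p h) x0 x0 ∧ x0 ^ p ^ l = x0 ∧ x0 ≠ 0} with hSa
    set T : Set K := (↑(Polynomial.nthRootsFinset dd (1 : K)) : Set K) \ {1} with hT
    have hTfin : T.Finite := (Polynomial.nthRootsFinset dd (1 : K)).finite_toSet.diff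
    have hmapA : ∀ x0 ∈ Sa, (x0 + 1) / x0 ∈ T := by
      rintro a ⟨hsa, haq, ha⟩
      have E := hsing a hsa
      have hA : a + 1 ≠ 0 := by
        intro hz
        rw [hz, zero_pow (Nat.mul_ne_zero (by omega) (by omega))] at E
        exact pow_ne_zero _ ha E.symm
      have hc0 : (a + 1) / a ≠ 0 := div_ne_zero hA ha
      have hcm : ((a + 1) / a) ^ (m - 1) = 1 := by
        rw [div_pow, hmu, E, div_self (pow_ne_zero _ ha)]
      have hAq : (a + 1) ^ p ^ l = a + 1 := by rw [add_pow_char_pow, haq, one_pow]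
      have hcq : ((a + 1) / a) ^ (p ^ l - 1) = 1 := by
        have hcq' : ((a + 1) / a) ^ p ^ l = (a + 1) / a := by rw [div_pow, hAq, haq]
        have h2 : ((a + 1) / a) ^ (p ^ l - 1) * ((a + 1) / a) = 1 * ((a + 1) / a) := by
          rw [one_mul, ← pow_succ, Nat.sub_add_cancel (by omega)]
          exact hcq'
        exact mul_right_cancel₀ hc0 h2
      have hcd : ((a + 1) / a) ^ dd = 1 :=
        orderOf_dvd_iff_pow_eq_one.1
          (Nat.dvd_gcd (orderOf_dvd_of_pow_eq_one hcm) (orderOf_dvd_of_pow_eq_one hcq))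
      have hc1 : (a + 1) / a ≠ 1 := by
        intro hc
        rw [div_eq_iff ha, one_mul] at hc
        exact hone a hc
      exact ⟨(Polynomial.mem_nthRootsFinset hd0 (1 : K)).2 hcd, hc1⟩
    have hinjA := hinj Sa (fun x hx => hx.2.2)
    have hfinA : Sa.Finite :=
      Set.Finite.of_finite_image (hTfin.subset (Set.image_subset_iff.2 hmapA)) hinjA
    refine ⟨hfinA, ?_⟩
    have hle := Set.ncard_le_ncard_of_injOn _ hmapA hinjA hTfin
    have h1T : (1 : K) ∈ Polynomial.nthRootsFinset dd (1 : K) :=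
      (Polynomial.mem_nthRootsFinset hd0 (1 : K)).2 (one_pow dd)
    have hTcard : T.ncard = (Polynomial.nthRootsFinset dd (1 : K)).card - 1 := by
      rw [hT, Set.ncard_diff_singleton_of_mem (Finset.mem_coe.mpr h1T), Set.ncard_coe_finset]
    have hcard_le : (Polynomial.nthRootsFinset dd (1 : K)).card ≤ dd := by
      classical
      rw [Polynomial.nthRootsFinset_def]
      exact le_trans (Multiset.toFinset_card_le _)
        (by simpa using Polynomial.card_nthRoots dd (1 : K))
    omega
  have countB : {x0 : K | IsSingAt (toK p h) x0 x0 ∧ x0 ^ p ^ l ≠ x0}.Finite ∧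
      {x0 : K | IsSingAt (toK p h) x0 x0 ∧ x0 ^ p ^ l ≠ x0}.ncard ≤ u - dd := by
    set Sb := {x0 : K | IsSingAt (toK p h) x0 x0 ∧ x0 ^ p ^ l ≠ x0} with hSb
    have hdq1 : dd ∣ p ^ l - 1 := Nat.gcd_dvd_right _ _
    have hcop : Nat.Coprime dd (p ^ l) := by
      have h1 : Nat.Coprime (p ^ l) (p ^ l - 1) := by
        show Nat.gcd (p ^ l) (p ^ l - 1) = 1
        rw [Nat.gcd_self_sub_right (by omega), Nat.gcd_one_right]
      exact Nat.Coprime.coprime_dvd_left hdq1 h1.symm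
    have hddu : dd ∣ u := by
      have hdm : dd ∣ p ^ l * u := hmu ▸ Nat.gcd_dvd_left (m - 1) (p ^ l - 1)
      exact hcop.dvd_of_dvd_mul_left hdm
    haveI hNu : NeZero ((u : K)) := ⟨fun hc => hpu ((CharP.cast_eq_zero_iff K p u).1 hc)⟩
    haveI hNd : NeZero ((dd : K)) :=
      ⟨fun hc => hpu (((CharP.cast_eq_zero_iff K p dd).1 hc).trans hddu)⟩
    obtain ⟨ζu, hζu⟩ := HasEnoughRootsOfUnity.exists_primitiveRoot K u
    obtain ⟨ζd, hζd⟩ := HasEnoughRootsOfUnity.exists_primitiveRoot K dd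
    set Tb : Set K := (↑(Polynomial.nthRootsFinset u (1 : K)) : Set K)
        \ ↑(Polynomial.nthRootsFinset dd (1 : K)) with hTb
    have hTbfin : Tb.Finite := (Polynomial.nthRootsFinset u (1 : K)).finite_toSet.diff
    have hsub : (↑(Polynomial.nthRootsFinset dd (1 : K)) : Set K)
        ⊆ ↑(Polynomial.nthRootsFinset u (1 : K)) := by
      intro x hx
      obtain ⟨k, hk⟩ := hddu
      have hx1 : x ^ dd = 1 := (Polynomial.mem_nthRootsFinset hd0 (1 : K)).1 hx
      exact (Polynomial.mem_nthRootsFinset (by omega) (1 : K)).2 (by rw [hk, pow_mul, hx1, one_pow])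
    have hmapB : ∀ x0 ∈ Sb, (x0 + 1) / x0 ∈ Tb := by
      rintro a ⟨hsa, haq⟩
      have ha : a ≠ 0 := by
        intro hz
        exact haq (by rw [hz, zero_pow (by omega)])
      have E := hsing a hsa
      have hA : a + 1 ≠ 0 := by
        intro hz
        rw [hz, zero_pow (Nat.mul_ne_zero (by omega) (by omega))] at E
        exact pow_ne_zero _ ha E.symm
      have hcm : ((a + 1) / a) ^ (p ^ l * u) = 1 := by
        rw [div_pow, E, div_self (pow_ne_zero _ ha)]
      have hcu : ((a + 1) / a) ^ u = 1 := by
        apply frobinj p l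
        rw [one_pow, ← pow_mul, mul_comm u (p ^ l)]
        exact hcm
      have hcd : ((a + 1) / a) ^ dd ≠ 1 := by
        intro hc
        apply haq
        obtain ⟨k, hk⟩ := hdq1
        have hq1 : ((a + 1) / a) ^ (p ^ l - 1) = 1 := by rw [hk, pow_mul, hc, one_pow]
        have hcq' : ((a + 1) / a) ^ p ^ l = (a + 1) / a := by
          have h3 : p ^ l - 1 + 1 = p ^ l := by omega
          rw [← h3, pow_succ, hq1, one_mul]
        rw [div_pow, add_pow_char_pow, one_pow] at hcq'
        have haq0 : a ^ p ^ l ≠ 0 := pow_ne_zero _ ha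
        rw [div_eq_div_iff haq0 ha] at hcq'
        linear_combination -hcq'
      exact ⟨(Polynomial.mem_nthRootsFinset (by omega) (1 : K)).2 hcu,
        fun hmem => hcd ((Polynomial.mem_nthRootsFinset hd0 (1 : K)).1 hmem)⟩
    have hinjB := hinj Sb (fun x hx hz => hx.2 (by rw [hz, zero_pow (by omega)]))
    have hfinB : Sb.Finite :=
      Set.Finite.of_finite_image (hTbfin.subset (Set.image_subset_iff.2 hmapB)) hinjB
    refine ⟨hfinB, ?_⟩
    have hle := Set.ncard_le_ncard_of_injOn _ hmapB hinjB hTbfin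
    have hTbcard : Tb.ncard = u - dd := by
      rw [hTb, Set.ncard_diff hsub (Polynomial.nthRootsFinset dd (1 : K)).finite_toSet,
        Set.ncard_coe_finset, Set.ncard_coe_finset, hζu.card_nthRootsFinset,
        hζd.card_nthRootsFinset]
    omega
  refine ⟨fun a hs haq ha => (hmm a hs ha).1 haq, countA, fun a hs haq => ?_,
    countB.1, by rw [hdivu]; exact countB.2⟩
  have ha : a ≠ 0 := fun hz => haq (by rw [hz, zero_pow (by omega)])
  exact (hmm a hs ha).2 haq
end

section
/- Let t = (x₀, x₀) be a singular point of h with x₀ in an algebraic closure K of F_p, let μ = m_t(h) be its multiplicity, and for each j let H_j and F_j denote the homogeneous components of total degree j of h(X+x₀, Y+x₀) and f(X+x₀, Y+x₀) in K[X,Y]. Then F_{μ+1} = (X−Y)·H_μ and F_{μ+2} = (X−Y)·H_{μ+1}; moreover there is a constant a ∈ K with F_{μ+1} = a·(X^{μ+1} − Y^{μ+1}), so that every linear factor of H_μ (i.e. every tangent line of h at t) divides (X^{μ+1} − Y^{μ+1})/(X−Y). -/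
open MvPolynomial

lemma hc_mul_homog {σ R : Type*} [CommSemiring R]
    (g φ : MvPolynomial σ R) (d : ℕ) (hg : g.IsHomogeneous d) (n : ℕ) :
    homogeneousComponent (n + d) (g * φ) = g * homogeneousComponent n φ := by
  induction φ using MvPolynomial.induction_on' with
  | monomial d' b =>
      have h1 : ((monomial d' b : MvPolynomial σ R)).IsHomogeneous d'.degree :=
        isHomogeneous_monomial _ rfl
      have h2 : (g * monomial d' b).IsHomogeneous (d + d'.degree) := hg.mul h1
      rw [homogeneousComponent_of_mem ((mem_homogeneousSubmodule _ _).2 h2),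
          homogeneousComponent_of_mem ((mem_homogeneousSubmodule _ _).2 h1)]
      by_cases hnd : n = d'.degree
      · simp [hnd, Nat.add_comm]
      · rw [if_neg (by omega), if_neg hnd, mul_zero]
  | add φ ψ hφ hψ => rw [mul_add, map_add, map_add, hφ, hψ, mul_add]

lemma hcomp_pow {K : Type*} [CommRing K] (i : Fin 2) (a : K) (m n : ℕ) :
    homogeneousComponent n ((X i + C a) ^ m) =
      C ((m.choose n : K) * a ^ (m - n)) * X i ^ n := by
  have hexp : (X i + C a) ^ m =
      ∑ k ∈ Finset.range (m + 1), C ((m.choose k : K) * a ^ (m - k)) * X i ^ k := by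
    rw [add_pow]
    refine Finset.sum_congr rfl fun k _ => ?_
    rw [← C_pow, ← C_eq_coe_nat, C_mul]
    ring
  rw [hexp, map_sum]
  have hterm : ∀ k, homogeneousComponent n (C ((m.choose k : K) * a ^ (m - k)) * X i ^ k) =
      if n = k then C ((m.choose k : K) * a ^ (m - k)) * X i ^ k else 0 := by
    intro k
    have hh := (isHomogeneous_C (Fin 2) ((m.choose k : K) * a ^ (m - k))).mul
      ((isHomogeneous_X K i).pow k)
    rw [zero_add, one_mul] at hh
    exact homogeneousComponent_of_mem ((mem_homogeneousSubmodule _ _).2 hh)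
  simp_rw [hterm]
  rw [Finset.sum_ite_eq (Finset.range (m + 1)) n]
  split_ifs with hn
  · rfl
  · have : m.choose n = 0 := Nat.choose_eq_zero_of_lt (by simpa using hn)
    simp [this]

lemma shift_shift {K : Type*} [CommRing K] (g : MvPolynomial (Fin 2) K) (a b : K) :
    shiftAt (shiftAt g a b) (-a) (-b) = g := by
  rw [shiftAt, shiftAt, comp_aeval_apply]
  have hfun : (fun i : Fin 2 =>
      (aeval fun j : Fin 2 => X j + C (![-a, -b] j)) (X i + C (![a, b] i))) =
      (X : Fin 2 → MvPolynomial (Fin 2) K) := by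
    funext i
    fin_cases i <;> simp
  rw [hfun, aeval_X_left_apply]

lemma shiftAt_ne_zero {K : Type*} [CommRing K] {g : MvPolynomial (Fin 2) K} (hg : g ≠ 0)
    (a b : K) : shiftAt g a b ≠ 0 := by
  intro hz
  apply hg
  have h2 := shift_shift g a b
  rw [hz] at h2
  simpa [shiftAt] using h2.symm

lemma fpoly_ne_zero (p : ℕ) [Fact p.Prime] (m : ℕ) (hm : 3 ≤ m) (hm1 : m ≡ 1 [MOD p]) :
    fpoly p m ≠ 0 := by
  intro hz
  have hev := congrArg (aeval (![Polynomial.X, 0] : Fin 2 → Polynomial (ZMod p))) hz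
  rw [fpoly] at hev
  simp only [map_add, map_sub, map_pow, map_one, aeval_X, Matrix.cons_val_zero,
    Matrix.cons_val_one, Matrix.head_cons, map_zero, zero_add, one_pow,
    zero_pow (show m ≠ 0 by omega), add_zero] at hev
  have hco := congrArg (fun q => Polynomial.coeff q (m - 1)) hev
  simp only [Polynomial.coeff_sub, Polynomial.coeff_X_add_one_pow, Polynomial.coeff_X_pow,
    Polynomial.coeff_one, Polynomial.coeff_zero,
    if_neg (show ¬ (m - 1 = m) by omega), if_neg (show ¬ (m - 1 = 0) by omega),
    sub_zero] at hco
  have hch : m.choose (m - 1) = m := by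
    rw [Nat.choose_symm (by omega : 1 ≤ m), Nat.choose_one_right]
  rw [hch] at hco
  have hmc : ((m : ℕ) : ZMod p) = ((1 : ℕ) : ZMod p) := (ZMod.natCast_eq_natCast_iff _ _ _).mpr hm1
  rw [hmc, Nat.cast_one] at hco
  exact one_ne_zero hco


set_option maxHeartbeats 1000000 in
/-- Let `t = (x₀,x₀)` be a singular point of `h` on the diagonal with multiplicity `μ`, and
let `H_j`, `F_j` be the degree-`j` homogeneous components of `h(X+x₀, Y+x₀)` and
`f(X+x₀, Y+x₀)`.  Then `F_{μ+1} = (X-Y)·H_μ`, `F_{μ+2} = (X-Y)·H_{μ+1}`, there is `a` with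
`F_{μ+1} = a·(X^{μ+1} - Y^{μ+1})`, and every (nonzero homogeneous) linear factor of `H_μ`
divides `(X^{μ+1} - Y^{μ+1})/(X-Y) = Σ_{i=0}^{μ} X^i Y^{μ-i}`. -/
theorem stmt13 (p : ℕ) [Fact p.Prime] (hp : Odd p)
    (m : ℕ) (hm : 3 ≤ m) (hm1 : m ≡ 1 [MOD p])
    (h : MvPolynomial (Fin 2) (ZMod p))
    (hfh : fpoly p m = (X 0 - X 1) * h)
    (x0 : AlgebraicClosure (ZMod p))
    (hsing : IsSingAt (toK p h) x0 x0) :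
    homogeneousComponent (multAt (toK p h) x0 x0 + 1) (shiftAt (toK p (fpoly p m)) x0 x0) =
      (X 0 - X 1) *
        homogeneousComponent (multAt (toK p h) x0 x0) (shiftAt (toK p h) x0 x0) ∧
    homogeneousComponent (multAt (toK p h) x0 x0 + 2) (shiftAt (toK p (fpoly p m)) x0 x0) =
      (X 0 - X 1) *
        homogeneousComponent (multAt (toK p h) x0 x0 + 1) (shiftAt (toK p h) x0 x0) ∧
    (∃ a : AlgebraicClosure (ZMod p),
      homogeneousComponent (multAt (toK p h) x0 x0 + 1) (shiftAt (toK p (fpoly p m)) x0 x0) =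
        C a * (X 0 ^ (multAt (toK p h) x0 x0 + 1) - X 1 ^ (multAt (toK p h) x0 x0 + 1))) ∧
    (∀ q : MvPolynomial (Fin 2) (AlgebraicClosure (ZMod p)), q ≠ 0 → q.IsHomogeneous 1 →
      q ∣ homogeneousComponent (multAt (toK p h) x0 x0) (shiftAt (toK p h) x0 x0) →
      q ∣ ∑ i ∈ Finset.range (multAt (toK p h) x0 x0 + 1),
            X 0 ^ i * X 1 ^ (multAt (toK p h) x0 x0 - i)) := by
  set μ := multAt (toK p h) x0 x0 with hμdef
  set Hs := shiftAt (toK p h) x0 x0 with hHs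
  have hX1hom : (X 0 - X 1 : MvPolynomial (Fin 2) (AlgebraicClosure (ZMod p))).IsHomogeneous 1 :=
    (isHomogeneous_X _ _).sub (isHomogeneous_X _ _)
  have hfh' : shiftAt (toK p (fpoly p m)) x0 x0 = (X 0 - X 1) * Hs := by
    rw [hfh, toK, map_mul, hHs, shiftAt, shiftAt, map_mul]
    congr 1
    simp only [map_sub, MvPolynomial.map_X, aeval_X, Matrix.cons_val_zero,
      Matrix.cons_val_one, Matrix.head_cons]
    ring
  have hFcomp : ∀ n, homogeneousComponent n (shiftAt (toK p (fpoly p m)) x0 x0) =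
      C ((m.choose n : AlgebraicClosure (ZMod p)) * ((x0 + 1) ^ (m - n) - x0 ^ (m - n))) *
        (X 0 ^ n - X 1 ^ n) := by
    intro n
    have hFs : shiftAt (toK p (fpoly p m)) x0 x0 =
        (X 0 + C (x0 + 1)) ^ m - (X 0 + C x0) ^ m - (X 1 + C (x0 + 1)) ^ m
          + (X 1 + C x0) ^ m := by
      rw [fpoly, toK, shiftAt]
      simp only [map_add, map_sub, map_pow, map_one, MvPolynomial.map_X, aeval_X,
        Matrix.cons_val_zero, Matrix.cons_val_one, Matrix.head_cons, C_add, C_1]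
      ring
    rw [hFs, LinearMap.map_add, LinearMap.map_sub, LinearMap.map_sub,
      hcomp_pow, hcomp_pow, hcomp_pow, hcomp_pow]
    simp only [C_mul, C_sub]
    ring
  have part1 : homogeneousComponent (μ + 1) (shiftAt (toK p (fpoly p m)) x0 x0) =
      (X 0 - X 1) * homogeneousComponent μ Hs := by
    rw [hfh']; exact hc_mul_homog _ _ 1 hX1hom μ
  have part2 : homogeneousComponent (μ + 2) (shiftAt (toK p (fpoly p m)) x0 x0) =
      (X 0 - X 1) * homogeneousComponent (μ + 1) Hs := by
    rw [hfh', show μ + 2 = (μ + 1) + 1 from rfl]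
    exact hc_mul_homog _ _ 1 hX1hom (μ + 1)
  refine ⟨part1, part2, ⟨_, hFcomp (μ + 1)⟩, ?_⟩
  intro q hq0 hq1 hqdvd
  set a : AlgebraicClosure (ZMod p) :=
    (m.choose (μ + 1) : AlgebraicClosure (ZMod p)) *
      ((x0 + 1) ^ (m - (μ + 1)) - x0 ^ (m - (μ + 1))) with ha
  set S : MvPolynomial (Fin 2) (AlgebraicClosure (ZMod p)) :=
    ∑ i ∈ Finset.range (μ + 1), X 0 ^ i * X 1 ^ (μ - i) with hS
  have hXne : (X 0 - X 1 : MvPolynomial (Fin 2) (AlgebraicClosure (ZMod p))) ≠ 0 := by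
    intro hz
    have := congrArg (eval ![1, 0]) hz
    simp at this
  have hgeom : S * (X 0 - X 1 : MvPolynomial (Fin 2) (AlgebraicClosure (ZMod p))) =
      X 0 ^ (μ + 1) - X 1 ^ (μ + 1) := by
    have := geom_sum₂_mul (X 0 : MvPolynomial (Fin 2) (AlgebraicClosure (ZMod p))) (X 1) (μ + 1)
    simpa [hS] using this
  have hkey : (X 0 - X 1) * homogeneousComponent μ Hs = (X 0 - X 1) * (C a * S) := by
    rw [← part1, hFcomp (μ + 1), ← hgeom, ← ha]
    ring
  have hHμ : homogeneousComponent μ Hs = C a * S := mul_left_cancel₀ hXne hkey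
  have hHne : Hs ≠ 0 := by
    rw [hHs]
    apply shiftAt_ne_zero
    intro hz
    have hh0 : h = 0 := by
      have hinj : Function.Injective
          (MvPolynomial.map (σ := Fin 2) (algebraMap (ZMod p) (AlgebraicClosure (ZMod p)))) :=
        MvPolynomial.map_injective _
          (algebraMap (ZMod p) (AlgebraicClosure (ZMod p))).injective
      apply hinj
      simpa [toK] using hz
    exact fpoly_ne_zero p m hm hm1 (by rw [hfh, hh0, mul_zero])
  have hset : {n : ℕ | homogeneousComponent n Hs ≠ 0}.Nonempty := by
    by_contra hcon
    rw [Set.not_nonempty_iff_eq_empty] at hcon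
    apply hHne
    have hall : ∀ n, homogeneousComponent n Hs = 0 := fun n =>
      not_not.mp (Set.eq_empty_iff_forall_notMem.mp hcon n)
    rw [← sum_homogeneousComponent Hs]
    exact Finset.sum_eq_zero fun i _ => hall i
  have hμmem : homogeneousComponent μ Hs ≠ 0 := by
    have := Nat.sInf_mem hset
    simpa [hμdef, multAt, hHs] using this
  have hane : a ≠ 0 := by
    intro h0
    apply hμmem
    rw [hHμ, h0, map_zero, zero_mul]
  rw [hHμ] at hqdvd
  have hfin : q ∣ C a⁻¹ * (C a * S) := Dvd.dvd.mul_left hqdvd _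
  rwa [← mul_assoc, ← C_mul, inv_mul_cancel₀ hane, C_1, one_mul] at hfin
end

section
/- Let t = (x₀, y₀) be a singular point of f with coordinates in an algebraic closure K of F_p such that x₀ ≠ y₀ and neither x₀ nor y₀ lies in F_{p^l}. Let F_{p^l} and F_{p^l+1} denote the homogeneous components of total degrees p^l and p^l + 1 of f(X+x₀, Y+y₀) in K[X,Y]. Then F_{p^l} and F_{p^l+1} have a common nonconstant factor in K[X,Y] if and only if y₀·(x₀+1)^{p^l}·(y₀^{p^l−1} − 1)^{p^l+1} = x₀·(y₀+1)^{p^l}·(x₀^{p^l−1} − 1)^{p^l+1}. -/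
open MvPolynomial

/-! ### Auxiliary lemmas -/

lemma Stmt15Aux.eq_C_of_totalDegree_eq_zero {R σ : Type*} [CommSemiring R] {p : MvPolynomial σ R}
    (h : p.totalDegree = 0) : p = C (coeff 0 p) := by
  have h2 := sum_homogeneousComponent p
  rw [h] at h2
  simpa [homogeneousComponent_zero] using h2.symm

lemma Stmt15Aux.totalDegree_eq_zero_of_isUnit {K : Type*} [CommRing K] [IsDomain K] :
    ∀ (n : ℕ) (c : MvPolynomial (Fin n) K), IsUnit c → c.totalDegree = 0 := by
  intro n
  induction n with
  | zero =>
    intro c _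
    rw [MvPolynomial.totalDegree_eq_zero_iff]
    intro m _ x
    exact x.elim0
  | succ n IH =>
    intro c h
    set e := MvPolynomial.finSuccEquiv K n with he
    have hu : IsUnit (e c) := h.map e
    have hdeg : (e c).natDegree = 0 := Polynomial.natDegree_eq_zero_of_isUnit hu
    have hC : e c = Polynomial.C ((e c).coeff 0) := Polynomial.eq_C_of_natDegree_eq_zero hdeg
    have hu0 : IsUnit ((e c).coeff 0) := Polynomial.isUnit_C.mp (hC ▸ hu)
    have h0 := IH _ hu0
    have hk : (e c).coeff 0 = C (MvPolynomial.coeff 0 ((e c).coeff 0)) :=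
      Stmt15Aux.eq_C_of_totalDegree_eq_zero h0
    set k := MvPolynomial.coeff 0 ((e c).coeff 0)
    have : c = C k := by
      have h3 : e c = Polynomial.C (C k) := by rw [hC, ← hk]
      have h4 : c = e.symm (Polynomial.C (C k)) := by
        rw [← h3]; exact (e.symm_apply_apply c).symm
      have h5 := congrFun (congrArg (fun f => f.toFun)
        (MvPolynomial.finSuccEquiv_comp_C_eq_C (R := K) n)) k
      simpa using h4.trans h5
    rw [this, totalDegree_C]

lemma Stmt15Aux.prime_X_sub_C_mul_X {K : Type*} [CommRing K] [IsDomain K] (r : K) :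
    Prime (X 0 - C r * X 1 : MvPolynomial (Fin 2) K) := by
  set e := MvPolynomial.finSuccEquiv K 1 with he
  rw [← MulEquiv.prime_iff e.toMulEquiv]
  have h1 : e (X 0) = Polynomial.X := MvPolynomial.finSuccEquiv_X_zero
  have h2 : e (X 1) = Polynomial.C (X 0) := by
    have : (1 : Fin 2) = Fin.succ 0 := rfl
    rw [this]
    exact MvPolynomial.finSuccEquiv_X_succ
  have h3 : e (C r) = Polynomial.C (C r) := by
    simp [e, MvPolynomial.finSuccEquiv_apply]
  have : e (X 0 - C r * X 1) = Polynomial.X - Polynomial.C (C r * X 0) := by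
    rw [map_sub, map_mul, h1, h2, h3, ← Polynomial.C_mul]
  rw [show e.toMulEquiv (X 0 - C r * X 1 : MvPolynomial (Fin 2) K) = e (X 0 - C r * X 1) from rfl,
    this]
  exact Polynomial.prime_X_sub_C _

/-- The structural criterion: the two binomial forms of degrees `q` and `q+1` have a common
nonconstant factor iff the coefficient relation holds. -/
lemma Stmt15Aux.key_iff {K : Type*} [Field K] [IsAlgClosed K] (p : ℕ) [Fact p.Prime] [CharP K p]
    (l : ℕ) (α β α' β' : K) (hα : α ≠ 0) :
    (∃ c : MvPolynomial (Fin 2) K, 0 < c.totalDegree ∧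
        c ∣ (C α * X 0 ^ p ^ l - C β * X 1 ^ p ^ l) ∧
        c ∣ (C α' * X 0 ^ (p ^ l + 1) - C β' * X 1 ^ (p ^ l + 1))) ↔
      β ^ (p ^ l + 1) * α' ^ p ^ l = α ^ (p ^ l + 1) * β' ^ p ^ l := by
  set q := p ^ l with hq
  have hqpos : 0 < q := pow_pos (Fact.out (p := p.Prime)).pos l
  obtain ⟨r, hr⟩ := IsAlgClosed.exists_pow_nat_eq (β / α) hqpos
  have hβeq : α * r ^ q = β := by rw [hr]; exact mul_div_cancel₀ β hα
  set π : MvPolynomial (Fin 2) K := X 0 - C r * X 1 with hπ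
  have hπq : π ^ q = X 0 ^ q - C (r ^ q) * X 1 ^ q := by
    rw [hπ, hq, sub_pow_char_pow, mul_pow, ← C_pow]
  have hFq : C α * X 0 ^ q - C β * X 1 ^ q = C α * π ^ q := by
    rw [hπq, mul_sub, ← hβeq, C_mul]
    ring
  have frob_inj : ∀ a b : K, a ^ q = b ^ q → a = b := by
    intro a b hab
    have : (a - b) ^ q = 0 := by rw [hq, sub_pow_char_pow, ← hq, hab, sub_self]
    have := pow_eq_zero_iff hqpos.ne' |>.mp this
    exact sub_eq_zero.mp this
  constructor
  · rintro ⟨c, hcdeg, hc1, hc2⟩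
    have hcq : c ∣ π ^ q := by
      obtain ⟨t, ht⟩ := hc1
      refine ⟨C α⁻¹ * t, ?_⟩
      have : C α * π ^ q = c * t := by rw [← hFq, ht]
      calc π ^ q = C α⁻¹ * (C α * π ^ q) := by
            rw [← mul_assoc, ← C_mul, inv_mul_cancel₀ hα, C_1, one_mul]
        _ = c * (C α⁻¹ * t) := by rw [this]; ring
    obtain ⟨i, hi, hassoc⟩ := (dvd_prime_pow (Stmt15Aux.prime_X_sub_C_mul_X r) q).mp hcq
    have hipos : 0 < i := by
      rcases Nat.eq_zero_or_pos i with h0 | h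
      · exfalso
        rw [h0, pow_zero] at hassoc
        have : IsUnit c := isUnit_of_dvd_one hassoc.dvd
        have := Stmt15Aux.totalDegree_eq_zero_of_isUnit 2 c this
        omega
      · exact h
    have hπc : π ∣ c := (dvd_pow_self π hipos.ne').trans hassoc.symm.dvd
    have hπF : π ∣ (C α' * X 0 ^ (q + 1) - C β' * X 1 ^ (q + 1)) := hπc.trans hc2
    set φ : MvPolynomial (Fin 2) K →ₐ[K] MvPolynomial (Fin 2) K :=
      aeval ![C r * X 1, X 1] with hφ
    have hφπ : φ π = 0 := by
      simp [hφ, hπ, aeval_X, algHom_C]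
    have hφF : φ (C α' * X 0 ^ (q + 1) - C β' * X 1 ^ (q + 1)) = 0 := by
      obtain ⟨t, ht⟩ := hπF
      rw [ht, map_mul, hφπ, zero_mul]
    have hφF2 : φ (C α' * X 0 ^ (q + 1) - C β' * X 1 ^ (q + 1))
        = C (α' * r ^ (q + 1) - β') * X 1 ^ (q + 1) := by
      simp only [hφ, map_sub, map_mul, map_pow, aeval_X, algHom_C,
        MvPolynomial.algebraMap_eq, Matrix.cons_val_zero, Matrix.cons_val_one, Matrix.head_cons]
      ring
    rw [hφF2] at hφF
    have hcoeff : α' * r ^ (q + 1) - β' = 0 := by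
      by_contra hne
      have hX : (X 1 : MvPolynomial (Fin 2) K) ^ (q + 1) ≠ 0 :=
        pow_ne_zero _ (MvPolynomial.X_ne_zero 1)
      have hCne : (C (α' * r ^ (q + 1) - β') : MvPolynomial (Fin 2) K) ≠ 0 := by
        rwa [Ne, MvPolynomial.C_eq_zero]
      exact (mul_ne_zero hCne hX) hφF
    have hrel : α' * r ^ (q + 1) = β' := sub_eq_zero.mp hcoeff
    have : β ^ (q + 1) = α ^ (q + 1) * (r ^ q) ^ (q + 1) := by rw [← hβeq]; ring
    rw [this, ← hrel]
    ring
  · intro hrel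
    have hβ'eq : α' * r ^ (q + 1) = β' := by
      apply frob_inj
      have expand : (α' * r ^ (q + 1)) ^ q * α ^ (q + 1) = α' ^ q * (α * r ^ q) ^ (q + 1) := by
        ring
      have : (α' * r ^ (q + 1)) ^ q * α ^ (q + 1) = β' ^ q * α ^ (q + 1) := by
        rw [expand, hβeq, mul_comm (α' ^ q) (β ^ (q + 1)), hrel]; ring
      exact mul_right_cancel₀ (pow_ne_zero _ hα) this
    refine ⟨π, ?_, ?_, ?_⟩
    · have hmem : (Finsupp.single (0 : Fin 2) 1) ∈ π.support := by
        rw [mem_support_iff]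
        have : coeff (Finsupp.single (0 : Fin 2) 1) π = 1 := by
          rw [hπ, coeff_sub, coeff_X, coeff_C_mul, coeff_X']
          rw [if_neg (by simp [Finsupp.single_eq_single_iff] : ¬ (Finsupp.single (1 : Fin 2) 1 = Finsupp.single (0 : Fin 2) 1))]
          simp
        rw [this]; exact one_ne_zero
      have := MvPolynomial.le_totalDegree hmem
      simpa using lt_of_lt_of_le
        (by simp : 0 < (Finsupp.single (0 : Fin 2) 1).sum fun _ e => e) this
    · rw [hFq]
      exact dvd_mul_of_dvd_right (dvd_pow_self π hqpos.ne') _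
    · have h1 : (C α' * X 0 ^ (q + 1) - C β' * X 1 ^ (q + 1) : MvPolynomial (Fin 2) K)
          = C α' * (X 0 ^ (q + 1) - (C r * X 1) ^ (q + 1)) := by
        rw [← hβ'eq, mul_pow, ← C_pow, mul_sub, C_mul]
        ring
      have h2 := dvd_mul_of_dvd_right
        (sub_dvd_pow_sub_pow (X 0 : MvPolynomial (Fin 2) K) (C r * X 1) (q + 1)) (C α')
      rw [h1]
      exact h2

lemma Stmt15Aux.hc_term {K : Type*} [CommSemiring K] (a : K) (i : Fin 2) (n k : ℕ) :
    homogeneousComponent n (C a * X i ^ k : MvPolynomial (Fin 2) K)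
      = if n = k then C a * X i ^ k else 0 :=
  homogeneousComponent_of_mem ((mem_homogeneousSubmodule _ _).mpr
    ((isHomogeneous_X_pow i k).C_mul a))

lemma Stmt15Aux.expand_pow {K : Type*} [Field K] (p : ℕ) [Fact p.Prime] [CharP K p]
    (l s : ℕ) (c : K) (i : Fin 2) :
    ((X i + C c) ^ (p ^ l * s + 1) : MvPolynomial (Fin 2) K)
      = ∑ j ∈ Finset.range (s + 1),
          (C ((s.choose j : K) * c ^ (p ^ l * (s - j))) * X i ^ (p ^ l * j + 1)
           + C ((s.choose j : K) * c ^ (p ^ l * (s - j) + 1)) * X i ^ (p ^ l * j)) := by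
  set q := p ^ l with hq
  have step1 : ((X i + C c) ^ (q * s + 1) : MvPolynomial (Fin 2) K)
      = (X i ^ q + C (c ^ q)) ^ s * (X i + C c) := by
    rw [pow_succ, pow_mul, hq, add_pow_char_pow, ← C_pow]
  have step2 : ((X i ^ q + C (c ^ q)) ^ s : MvPolynomial (Fin 2) K)
      = ∑ j ∈ Finset.range (s + 1),
          (X i ^ q) ^ j * C (c ^ q) ^ (s - j) * (s.choose j : MvPolynomial (Fin 2) K) :=
    add_pow _ _ _
  rw [step1, step2, Finset.sum_mul]
  refine Finset.sum_congr rfl fun j hj => ?_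
  have e1 : (C (c ^ (q * (s - j))) : MvPolynomial (Fin 2) K) = C (c ^ q) ^ (s - j) := by
    rw [← C_pow, pow_mul]
  have e2 : (C (c ^ (q * (s - j) + 1)) : MvPolynomial (Fin 2) K)
      = C c * C (c ^ q) ^ (s - j) := by
    rw [← C_pow, ← C_mul, ← pow_mul, ← pow_succ']
  have e3 : ((s.choose j : ℕ) : MvPolynomial (Fin 2) K) = C ((s.choose j : ℕ) : K) :=
    (map_natCast (C : K →+* MvPolynomial (Fin 2) K) _).symm
  rw [C_mul, C_mul, e1, e2, e3]
  ring

lemma Stmt15Aux.hc_q {K : Type*} [Field K] (p : ℕ) [Fact p.Prime] [CharP K p] (l s : ℕ)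
    (hl : 1 ≤ l) (hs : 1 ≤ s) (c : K) (i : Fin 2) :
    homogeneousComponent (p ^ l) ((X i + C c) ^ (p ^ l * s + 1) : MvPolynomial (Fin 2) K)
      = C ((s : K) * c ^ (p ^ l * (s - 1) + 1)) * X i ^ p ^ l := by
  have hq2 : 2 ≤ p ^ l :=
    le_trans (Fact.out (p := p.Prime)).two_le (Nat.le_self_pow (by omega) p)
  set q := p ^ l with hq
  rw [Stmt15Aux.expand_pow p l s c i, map_sum]
  simp only [map_add, Stmt15Aux.hc_term]
  rw [Finset.sum_add_distrib]
  have h1 : ∑ j ∈ Finset.range (s + 1),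
      (if q = q * j + 1 then C ((s.choose j : K) * c ^ (q * (s - j))) * X i ^ (q * j + 1) else 0)
      = 0 := by
    refine Finset.sum_eq_zero fun j hj => ?_
    rw [if_neg]
    rcases Nat.eq_zero_or_pos j with h0 | hpos
    · subst h0; omega
    · have : q ≤ q * j := Nat.le_mul_of_pos_right q hpos
      omega
  have h2 : ∑ j ∈ Finset.range (s + 1),
      (if q = q * j then C ((s.choose j : K) * c ^ (q * (s - j) + 1)) * X i ^ (q * j) else 0)
      = C ((s : K) * c ^ (q * (s - 1) + 1)) * X i ^ q := by
    rw [Finset.sum_eq_single 1]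
    · rw [if_pos (mul_one q).symm, Nat.choose_one_right, mul_one]
    · intro j hj hne
      rw [if_neg]
      intro h
      exact hne (Nat.eq_of_mul_eq_mul_left (by omega) (h.symm.trans (mul_one q).symm))
    · intro h
      exact absurd (Finset.mem_range.mpr (by omega)) h
  rw [h1, h2, zero_add]

lemma Stmt15Aux.hc_q1 {K : Type*} [Field K] (p : ℕ) [Fact p.Prime] [CharP K p] (l s : ℕ)
    (hl : 1 ≤ l) (hs : 1 ≤ s) (c : K) (i : Fin 2) :
    homogeneousComponent (p ^ l + 1) ((X i + C c) ^ (p ^ l * s + 1) : MvPolynomial (Fin 2) K)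
      = C ((s : K) * c ^ (p ^ l * (s - 1))) * X i ^ (p ^ l + 1) := by
  have hq2 : 2 ≤ p ^ l :=
    le_trans (Fact.out (p := p.Prime)).two_le (Nat.le_self_pow (by omega) p)
  set q := p ^ l with hq
  rw [Stmt15Aux.expand_pow p l s c i, map_sum]
  simp only [map_add, Stmt15Aux.hc_term]
  rw [Finset.sum_add_distrib]
  have h1 : ∑ j ∈ Finset.range (s + 1),
      (if q + 1 = q * j + 1 then C ((s.choose j : K) * c ^ (q * (s - j))) * X i ^ (q * j + 1)
       else 0)
      = C ((s : K) * c ^ (q * (s - 1))) * X i ^ (q + 1) := by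
    rw [Finset.sum_eq_single 1]
    · rw [if_pos (by omega : q + 1 = q * 1 + 1), Nat.choose_one_right, mul_one]
    · intro j hj hne
      rw [if_neg]
      intro h
      exact hne (Nat.eq_of_mul_eq_mul_left (by omega) (by omega : q * j = q * 1))
    · intro h
      exact absurd (Finset.mem_range.mpr (by omega)) h
  have h2 : ∑ j ∈ Finset.range (s + 1),
      (if q + 1 = q * j then C ((s.choose j : K) * c ^ (q * (s - j) + 1)) * X i ^ (q * j) else 0)
      = 0 := by
    refine Finset.sum_eq_zero fun j hj => ?_
    rw [if_neg]
    intro h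
    rcases Nat.lt_or_ge j 2 with hj2 | hj2
    · interval_cases j <;> omega
    · have : q * 2 ≤ q * j := Nat.mul_le_mul_left q hj2
      omega
  rw [h1, h2, add_zero]

section Stmt15Eval

variable (p : ℕ) [Fact p.Prime] (m : ℕ) (x0 y0 : AlgebraicClosure (ZMod p))

lemma Stmt15Aux.toK_fpoly : toK p (fpoly p m) =
    (X 0 + 1) ^ m - X 0 ^ m - (X 1 + 1) ^ m + X 1 ^ m := by
  simp [toK, fpoly, map_add, map_sub, map_pow]

lemma Stmt15Aux.shift_eq : shiftAt (toK p (fpoly p m)) x0 y0 =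
    (X 0 + C (x0 + 1)) ^ m - (X 0 + C x0) ^ m - (X 1 + C (y0 + 1)) ^ m + (X 1 + C y0) ^ m := by
  rw [Stmt15Aux.toK_fpoly, shiftAt]
  simp only [map_add, map_sub, map_pow, aeval_X, map_one]
  simp [C_add, C_1]
  ring

lemma Stmt15Aux.eval_f (hsing : IsSingAt (toK p (fpoly p m)) x0 y0) :
    (x0 + 1) ^ m - x0 ^ m - (y0 + 1) ^ m + y0 ^ m = 0 := by
  have h := hsing.1
  rw [Stmt15Aux.toK_fpoly] at h
  simpa using h

lemma Stmt15Aux.eval_pd0 (hsing : IsSingAt (toK p (fpoly p m)) x0 y0) :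
    (m : AlgebraicClosure (ZMod p)) * ((x0 + 1) ^ (m - 1) - x0 ^ (m - 1)) = 0 := by
  have h := hsing.2.1
  rw [Stmt15Aux.toK_fpoly] at h
  simp only [map_add, map_sub, pderiv_pow, pderiv_X_self,
    pderiv_X_of_ne (by decide : (1 : Fin 2) ≠ 0), pderiv_one, map_one] at h
  simp only [map_add, map_sub, map_mul, map_pow, eval_X, eval_C, map_natCast, map_one,
    map_zero, Matrix.cons_val_zero, Matrix.cons_val_one, Matrix.head_cons] at h
  linear_combination h

lemma Stmt15Aux.eval_pd1 (hsing : IsSingAt (toK p (fpoly p m)) x0 y0) :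
    (m : AlgebraicClosure (ZMod p)) * ((y0 + 1) ^ (m - 1) - y0 ^ (m - 1)) = 0 := by
  have h := hsing.2.2
  rw [Stmt15Aux.toK_fpoly] at h
  simp only [map_add, map_sub, pderiv_pow, pderiv_X_self,
    pderiv_X_of_ne (by decide : (0 : Fin 2) ≠ 1), pderiv_one, map_one] at h
  simp only [map_add, map_sub, map_mul, map_pow, eval_X, eval_C, map_natCast, map_one,
    map_zero, Matrix.cons_val_zero, Matrix.cons_val_one, Matrix.head_cons] at h
  linear_combination -h

end Stmt15Eval

set_option maxHeartbeats 2000000 in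
/-- Let `t = (x₀,y₀)` be a singular point of `f` with `x₀ ≠ y₀` and neither `x₀` nor `y₀`
in the subfield `F_{p^l}` of the algebraic closure `K`.  Then the homogeneous components
of degrees `p^l` and `p^l + 1` of `f(X+x₀, Y+y₀)` have a common nonconstant factor in
`K[X,Y]` iff `y₀(x₀+1)^{p^l}(y₀^{p^l-1} - 1)^{p^l+1} = x₀(y₀+1)^{p^l}(x₀^{p^l-1} - 1)^{p^l+1}`. -/
theorem stmt15 (p : ℕ) [Fact p.Prime] (hp : Odd p)
    (m l : ℕ) (hm : 3 ≤ m) (hm1 : m ≡ 1 [MOD p])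
    (hl : p ^ l ∣ m - 1) (hl' : ¬ p ^ (l + 1) ∣ m - 1)
    (x0 y0 : AlgebraicClosure (ZMod p)) (hxy : x0 ≠ y0)
    (hx : x0 ^ p ^ l ≠ x0) (hy : y0 ^ p ^ l ≠ y0)
    (hsing : IsSingAt (toK p (fpoly p m)) x0 y0) :
    (∃ c : MvPolynomial (Fin 2) (AlgebraicClosure (ZMod p)), 0 < c.totalDegree ∧
        c ∣ homogeneousComponent (p ^ l) (shiftAt (toK p (fpoly p m)) x0 y0) ∧
        c ∣ homogeneousComponent (p ^ l + 1) (shiftAt (toK p (fpoly p m)) x0 y0)) ↔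
      y0 * (x0 + 1) ^ p ^ l * (y0 ^ (p ^ l - 1) - 1) ^ (p ^ l + 1) =
        x0 * (y0 + 1) ^ p ^ l * (x0 ^ (p ^ l - 1) - 1) ^ (p ^ l + 1) := by
  classical
  have hp2 : 2 ≤ p := (Fact.out (p := p.Prime)).two_le
  have hl1 : 1 ≤ l := by
    by_contra h
    push_neg at h
    interval_cases l
    exact hl' (by simpa using (Nat.modEq_iff_dvd' (by omega)).mp hm1.symm)
  have hqpos : 0 < p ^ l := pow_pos (by omega) l
  have hq2 : 2 ≤ p ^ l := le_trans hp2 (Nat.le_self_pow (by omega) p)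
  have hqodd : Odd (p ^ l) := hp.pow
  set s : ℕ := (m - 1) / p ^ l with hsdef
  have hms : p ^ l * s = m - 1 := Nat.mul_div_cancel' hl
  have hs1 : 1 ≤ s := by
    rcases Nat.eq_zero_or_pos s with h | h
    · rw [h, mul_zero] at hms; omega
    · exact h
  have hmeq : m = p ^ l * s + 1 := by omega
  have hps : ¬ (p ∣ s) := by
    intro hdvd
    apply hl'
    have h2 : p ^ l * p ∣ p ^ l * s := mul_dvd_mul_left _ hdvd
    rw [hms] at h2
    rwa [pow_succ]
  have hsK : ((s : ℕ) : AlgebraicClosure (ZMod p)) ≠ 0 := by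
    rw [Ne, CharP.cast_eq_zero_iff (AlgebraicClosure (ZMod p)) p]
    exact hps
  have hmK : ((m : ℕ) : AlgebraicClosure (ZMod p)) = 1 := by
    rw [hmeq]
    push_cast
    rw [CharP.cast_eq_zero (AlgebraicClosure (ZMod p)) p, zero_pow (by omega : l ≠ 0)]
    ring
  -- singularity consequences
  have hpdx := Stmt15Aux.eval_pd0 p m x0 y0 hsing
  have hpdy := Stmt15Aux.eval_pd1 p m x0 y0 hsing
  rw [hmK, one_mul] at hpdx hpdy
  have hW : (x0 + 1) ^ (p ^ l * s) = x0 ^ (p ^ l * s) := by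
    rw [hms]; exact sub_eq_zero.mp hpdx
  have hWy : (y0 + 1) ^ (p ^ l * s) = y0 ^ (p ^ l * s) := by
    rw [hms]; exact sub_eq_zero.mp hpdy
  have hfe := Stmt15Aux.eval_f p m x0 y0 hsing
  have hWxy : y0 ^ (p ^ l * s) = x0 ^ (p ^ l * s) := by
    rw [hmeq] at hfe
    simp only [pow_succ] at hfe
    linear_combination -hfe + (x0 + 1) * hW - (y0 + 1) * hWy
  -- nonvanishing
  have hx0 : x0 ≠ 0 := by
    rintro rfl
    exact hx (by rw [zero_pow hqpos.ne'])
  have hy0 : y0 ≠ 0 := by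
    rintro rfl
    exact hy (by rw [zero_pow hqpos.ne'])
  have hx1 : x0 + 1 ≠ 0 := by
    intro h
    have hxe : x0 = -1 := eq_neg_of_add_eq_zero_left h
    apply hx
    rw [hxe, hqodd.neg_one_pow]
  have hy1 : y0 + 1 ≠ 0 := by
    intro h
    have hye : y0 = -1 := eq_neg_of_add_eq_zero_left h
    apply hy
    rw [hye, hqodd.neg_one_pow]
  have hZ : x0 ^ (p ^ l * s) ≠ 0 := pow_ne_zero _ hx0
  have hdx : x0 ^ p ^ l - x0 ≠ 0 := sub_ne_zero.mpr hx
  have hdy : y0 ^ p ^ l - y0 ≠ 0 := sub_ne_zero.mpr hy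
  have hfrx : (x0 + 1) ^ p ^ l = x0 ^ p ^ l + 1 := by
    rw [add_pow_char_pow, one_pow]
  have hfry : (y0 + 1) ^ p ^ l = y0 ^ p ^ l + 1 := by
    rw [add_pow_char_pow, one_pow]
  have hs' : s - 1 + 1 = s := by omega
  have hE : p ^ l * (s - 1) + p ^ l = p ^ l * s := by
    conv_rhs => rw [← hs', mul_add, mul_one]
  have hE1 : p ^ l * (s - 1) + 1 + p ^ l = p ^ l * s + 1 := by
    rw [add_right_comm, hE]
  -- identities
  have e1x : (x0 + 1) ^ (p ^ l * (s - 1) + 1) * (x0 + 1) ^ p ^ l = x0 ^ (p ^ l * s) * (x0 + 1) := by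
    rw [← pow_add, hE1, pow_succ, hW]
  have e2x : x0 ^ (p ^ l * (s - 1) + 1) * x0 ^ p ^ l = x0 ^ (p ^ l * s) * x0 := by
    rw [← pow_add, hE1, pow_succ]
  have I1x : ((x0 + 1) ^ (p ^ l * (s - 1) + 1) - x0 ^ (p ^ l * (s - 1) + 1)) * (x0 ^ p ^ l * (x0 + 1) ^ p ^ l)
      = x0 ^ (p ^ l * s) * (x0 ^ p ^ l - x0) := by
    linear_combination x0 ^ p ^ l * e1x - (x0 + 1) ^ p ^ l * e2x - (x0 ^ (p ^ l * s) * x0) * hfrx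
  have e1x' : (x0 + 1) ^ (p ^ l * (s - 1)) * (x0 + 1) ^ p ^ l = x0 ^ (p ^ l * s) := by
    rw [← pow_add, hE, hW]
  have e2x' : x0 ^ (p ^ l * (s - 1)) * x0 ^ p ^ l = x0 ^ (p ^ l * s) := by
    rw [← pow_add, hE]
  have I2x : ((x0 + 1) ^ (p ^ l * (s - 1)) - x0 ^ (p ^ l * (s - 1))) * (x0 ^ p ^ l * (x0 + 1) ^ p ^ l)
      = -(x0 ^ (p ^ l * s)) := by
    linear_combination x0 ^ p ^ l * e1x' - (x0 + 1) ^ p ^ l * e2x' - x0 ^ (p ^ l * s) * hfrx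
  have e1y : (y0 + 1) ^ (p ^ l * (s - 1) + 1) * (y0 + 1) ^ p ^ l = y0 ^ (p ^ l * s) * (y0 + 1) := by
    rw [← pow_add, hE1, pow_succ, hWy]
  have e2y : y0 ^ (p ^ l * (s - 1) + 1) * y0 ^ p ^ l = y0 ^ (p ^ l * s) * y0 := by
    rw [← pow_add, hE1, pow_succ]
  have I1y : ((y0 + 1) ^ (p ^ l * (s - 1) + 1) - y0 ^ (p ^ l * (s - 1) + 1)) * (y0 ^ p ^ l * (y0 + 1) ^ p ^ l)
      = x0 ^ (p ^ l * s) * (y0 ^ p ^ l - y0) := by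
    rw [← hWxy]
    linear_combination y0 ^ p ^ l * e1y - (y0 + 1) ^ p ^ l * e2y - (y0 ^ (p ^ l * s) * y0) * hfry
  have e1y' : (y0 + 1) ^ (p ^ l * (s - 1)) * (y0 + 1) ^ p ^ l = y0 ^ (p ^ l * s) := by
    rw [← pow_add, hE, hWy]
  have e2y' : y0 ^ (p ^ l * (s - 1)) * y0 ^ p ^ l = y0 ^ (p ^ l * s) := by
    rw [← pow_add, hE]
  have I2y : ((y0 + 1) ^ (p ^ l * (s - 1)) - y0 ^ (p ^ l * (s - 1))) * (y0 ^ p ^ l * (y0 + 1) ^ p ^ l)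
      = -(x0 ^ (p ^ l * s)) := by
    rw [← hWxy]
    linear_combination y0 ^ p ^ l * e1y' - (y0 + 1) ^ p ^ l * e2y' - y0 ^ (p ^ l * s) * hfry
  have hXq : (x0 ^ p ^ l * (x0 + 1) ^ p ^ l) ≠ 0 := mul_ne_zero (pow_ne_zero _ hx0) (pow_ne_zero _ hx1)
  have hYq : (y0 ^ p ^ l * (y0 + 1) ^ p ^ l) ≠ 0 := mul_ne_zero (pow_ne_zero _ hy0) (pow_ne_zero _ hy1)
  have ha1x : (x0 + 1) ^ (p ^ l * (s - 1) + 1) - x0 ^ (p ^ l * (s - 1) + 1) ≠ 0 := by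
    intro h
    rw [h, zero_mul] at I1x
    exact (mul_ne_zero hZ hdx) I1x.symm
  have ha2x : (x0 + 1) ^ (p ^ l * (s - 1)) - x0 ^ (p ^ l * (s - 1)) ≠ 0 := by
    intro h
    rw [h, zero_mul] at I2x
    exact (neg_ne_zero.mpr hZ) I2x.symm
  have ha1y : (y0 + 1) ^ (p ^ l * (s - 1) + 1) - y0 ^ (p ^ l * (s - 1) + 1) ≠ 0 := by
    intro h
    rw [h, zero_mul] at I1y
    exact (mul_ne_zero hZ hdy) I1y.symm
  have ha2y : (y0 + 1) ^ (p ^ l * (s - 1)) - y0 ^ (p ^ l * (s - 1)) ≠ 0 := by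
    intro h
    rw [h, zero_mul] at I2y
    exact (neg_ne_zero.mpr hZ) I2y.symm
  -- homogeneous components
  have hcompq : homogeneousComponent (p ^ l) (shiftAt (toK p (fpoly p m)) x0 y0)
      = C ((s : AlgebraicClosure (ZMod p)) * ((x0 + 1) ^ (p ^ l * (s - 1) + 1) - x0 ^ (p ^ l * (s - 1) + 1))) * X 0 ^ p ^ l
        - C ((s : AlgebraicClosure (ZMod p)) * ((y0 + 1) ^ (p ^ l * (s - 1) + 1) - y0 ^ (p ^ l * (s - 1) + 1)))
          * X 1 ^ p ^ l := by
    rw [Stmt15Aux.shift_eq, hmeq, map_add, map_sub, map_sub,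
      Stmt15Aux.hc_q p l s hl1 hs1 (x0 + 1) 0, Stmt15Aux.hc_q p l s hl1 hs1 x0 0,
      Stmt15Aux.hc_q p l s hl1 hs1 (y0 + 1) 1, Stmt15Aux.hc_q p l s hl1 hs1 y0 1]
    simp only [C_mul, C_sub]
    ring
  have hcompq1 : homogeneousComponent (p ^ l + 1) (shiftAt (toK p (fpoly p m)) x0 y0)
      = C ((s : AlgebraicClosure (ZMod p)) * ((x0 + 1) ^ (p ^ l * (s - 1)) - x0 ^ (p ^ l * (s - 1)))) * X 0 ^ (p ^ l + 1)
        - C ((s : AlgebraicClosure (ZMod p)) * ((y0 + 1) ^ (p ^ l * (s - 1)) - y0 ^ (p ^ l * (s - 1))))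
          * X 1 ^ (p ^ l + 1) := by
    rw [Stmt15Aux.shift_eq, hmeq, map_add, map_sub, map_sub,
      Stmt15Aux.hc_q1 p l s hl1 hs1 (x0 + 1) 0, Stmt15Aux.hc_q1 p l s hl1 hs1 x0 0,
      Stmt15Aux.hc_q1 p l s hl1 hs1 (y0 + 1) 1, Stmt15Aux.hc_q1 p l s hl1 hs1 y0 1]
    simp only [C_mul, C_sub]
    ring
  rw [hcompq, hcompq1,
    Stmt15Aux.key_iff p l _ _ _ _ (mul_ne_zero hsK ha1x)]
  -- now pure field algebra
  set a1x := (x0 + 1) ^ (p ^ l * (s - 1) + 1) - x0 ^ (p ^ l * (s - 1) + 1) with ha1xd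
  set a2x := (x0 + 1) ^ (p ^ l * (s - 1)) - x0 ^ (p ^ l * (s - 1)) with ha2xd
  set a1y := (y0 + 1) ^ (p ^ l * (s - 1) + 1) - y0 ^ (p ^ l * (s - 1) + 1) with ha1yd
  set a2y := (y0 + 1) ^ (p ^ l * (s - 1)) - y0 ^ (p ^ l * (s - 1)) with ha2yd
  set Z := x0 ^ (p ^ l * s) with hZd
  set Xq := (x0 ^ p ^ l * (x0 + 1) ^ p ^ l) with hXqd
  set Yq := (y0 ^ p ^ l * (y0 + 1) ^ p ^ l) with hYqd
  set q := p ^ l with hqd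
  have hI2xq : a2x ^ q * Xq ^ q = -(Z ^ q) := by
    rw [← mul_pow, I2x, hqodd.neg_pow]
  have hI2yq : a2y ^ q * Yq ^ q = -(Z ^ q) := by
    rw [← mul_pow, I2y, hqodd.neg_pow]
  have hI1yq : a1y ^ (q + 1) * Yq ^ (q + 1) = Z ^ (q + 1) * (y0 ^ q - y0) ^ (q + 1) := by
    rw [← mul_pow, I1y, mul_pow]
  have hI1xq : a1x ^ (q + 1) * Xq ^ (q + 1) = Z ^ (q + 1) * (x0 ^ q - x0) ^ (q + 1) := by
    rw [← mul_pow, I1x, mul_pow]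
  have hMne : (s : AlgebraicClosure (ZMod p)) ^ (2 * q + 1) * Z ^ (2 * q + 1) * Xq ^ q * Yq ^ q
      ≠ 0 :=
    mul_ne_zero (mul_ne_zero (mul_ne_zero (pow_ne_zero _ hsK) (pow_ne_zero _ hZ))
      (pow_ne_zero _ hXq)) (pow_ne_zero _ hYq)
  have hNne : (Xq * Yq) ^ (2 * q + 1) ≠ 0 := pow_ne_zero _ (mul_ne_zero hXq hYq)
  have L1 : ((s : AlgebraicClosure (ZMod p)) * a1y) ^ (q + 1)
        * ((s : AlgebraicClosure (ZMod p)) * a2x) ^ q * (Xq * Yq) ^ (2 * q + 1)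
      = -(((s : AlgebraicClosure (ZMod p)) ^ (2 * q + 1) * Z ^ (2 * q + 1) * Xq ^ q * Yq ^ q)
        * ((y0 ^ q - y0) ^ (q + 1) * Xq)) := by
    rw [mul_pow (s : AlgebraicClosure (ZMod p)) a1y, mul_pow (s : AlgebraicClosure (ZMod p)) a2x,
      mul_pow Xq Yq]
    calc (s : AlgebraicClosure (ZMod p)) ^ (q + 1) * a1y ^ (q + 1)
          * ((s : AlgebraicClosure (ZMod p)) ^ q * a2x ^ q) * (Xq ^ (2 * q + 1) * Yq ^ (2 * q + 1))
        = (s : AlgebraicClosure (ZMod p)) ^ (2 * q + 1)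
            * ((a1y ^ (q + 1) * Yq ^ (q + 1)) * (a2x ^ q * Xq ^ q) * (Xq ^ (q + 1) * Yq ^ q)) := by
          ring
      _ = (s : AlgebraicClosure (ZMod p)) ^ (2 * q + 1)
            * ((Z ^ (q + 1) * (y0 ^ q - y0) ^ (q + 1)) * (-(Z ^ q)) * (Xq ^ (q + 1) * Yq ^ q)) := by
          rw [hI1yq, hI2xq]
      _ = _ := by ring
  have L2 : ((s : AlgebraicClosure (ZMod p)) * a1x) ^ (q + 1)
        * ((s : AlgebraicClosure (ZMod p)) * a2y) ^ q * (Xq * Yq) ^ (2 * q + 1)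
      = -(((s : AlgebraicClosure (ZMod p)) ^ (2 * q + 1) * Z ^ (2 * q + 1) * Xq ^ q * Yq ^ q)
        * ((x0 ^ q - x0) ^ (q + 1) * Yq)) := by
    rw [mul_pow (s : AlgebraicClosure (ZMod p)) a1x, mul_pow (s : AlgebraicClosure (ZMod p)) a2y,
      mul_pow Xq Yq]
    calc (s : AlgebraicClosure (ZMod p)) ^ (q + 1) * a1x ^ (q + 1)
          * ((s : AlgebraicClosure (ZMod p)) ^ q * a2y ^ q) * (Xq ^ (2 * q + 1) * Yq ^ (2 * q + 1))
        = (s : AlgebraicClosure (ZMod p)) ^ (2 * q + 1)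
            * ((a1x ^ (q + 1) * Xq ^ (q + 1)) * (a2y ^ q * Yq ^ q) * (Yq ^ (q + 1) * Xq ^ q)) := by
          ring
      _ = (s : AlgebraicClosure (ZMod p)) ^ (2 * q + 1)
            * ((Z ^ (q + 1) * (x0 ^ q - x0) ^ (q + 1)) * (-(Z ^ q)) * (Yq ^ (q + 1) * Xq ^ q)) := by
          rw [hI1xq, hI2yq]
      _ = _ := by ring
  have hq1x : x0 * x0 ^ (q - 1) = x0 ^ q := by
    rw [← pow_succ']
    congr 1
    omega
  have hq1y : y0 * y0 ^ (q - 1) = y0 ^ q := by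
    rw [← pow_succ']
    congr 1
    omega
  have hdxf : x0 ^ q - x0 = x0 * (x0 ^ (q - 1) - 1) := by
    rw [mul_sub, hq1x, mul_one]
  have hdyf : y0 ^ q - y0 = y0 * (y0 ^ (q - 1) - 1) := by
    rw [mul_sub, hq1y, mul_one]
  have hXY : x0 ^ q * y0 ^ q ≠ 0 := mul_ne_zero (pow_ne_zero _ hx0) (pow_ne_zero _ hy0)
  have hE2iff : (y0 ^ q - y0) ^ (q + 1) * Xq = (x0 ^ q - x0) ^ (q + 1) * Yq ↔
      y0 * (x0 + 1) ^ q * (y0 ^ (q - 1) - 1) ^ (q + 1)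
        = x0 * (y0 + 1) ^ q * (x0 ^ (q - 1) - 1) ^ (q + 1) := by
    have lhs_eq : (y0 ^ q - y0) ^ (q + 1) * Xq
        = (x0 ^ q * y0 ^ q) * (y0 * (x0 + 1) ^ q * (y0 ^ (q - 1) - 1) ^ (q + 1)) := by
      rw [hdyf, mul_pow, hXqd]
      ring
    have rhs_eq : (x0 ^ q - x0) ^ (q + 1) * Yq
        = (x0 ^ q * y0 ^ q) * (x0 * (y0 + 1) ^ q * (x0 ^ (q - 1) - 1) ^ (q + 1)) := by
      rw [hdxf, mul_pow, hYqd]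
      ring
    rw [lhs_eq, rhs_eq]
    constructor
    · exact fun h => mul_left_cancel₀ hXY h
    · exact fun h => by rw [h]
  constructor
  · intro h
    have h2 : -(((s : AlgebraicClosure (ZMod p)) ^ (2 * q + 1) * Z ^ (2 * q + 1) * Xq ^ q * Yq ^ q)
        * ((y0 ^ q - y0) ^ (q + 1) * Xq))
        = -(((s : AlgebraicClosure (ZMod p)) ^ (2 * q + 1) * Z ^ (2 * q + 1) * Xq ^ q * Yq ^ q)
        * ((x0 ^ q - x0) ^ (q + 1) * Yq)) := by
      rw [← L1, ← L2, h]
    exact hE2iff.mp (mul_left_cancel₀ hMne (neg_inj.mp h2))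
  · intro h
    apply mul_right_cancel₀ hNne
    rw [L1, L2, hE2iff.mpr h]
end

section
/- Let g ∈ F_p[x,y] be a nonconstant polynomial with no absolutely irreducible factor over F_p. Then over an algebraic closure K of F_p there is a factorization g = u·v with u, v ∈ K[x,y] nonconstant such that |deg(u) − deg(v)| ≤ deg(g)/3; in particular deg(u)·deg(v) ≥ (2/9)·deg(g)². -/
open MvPolynomial

/-! ### Degree-lex machinery: total degree is multiplicative over a domain (two variables) -/

noncomputable def DL : (Fin 2 →₀ ℕ) → ℕ ×ₗ ℕ := fun m => toLex (m 0 + m 1, m 0)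

lemma DL_inj : Function.Injective DL := by
  intro a b h
  have h2 : ((a 0 + a 1 : ℕ), (a 0 : ℕ)) = (b 0 + b 1, b 0) := toLex.injective h
  have h3 : a 0 + a 1 = b 0 + b 1 := congrArg Prod.fst h2
  have h4 : a 0 = b 0 := congrArg Prod.snd h2
  ext i
  fin_cases i
  · exact h4
  · show a 1 = b 1
    omega

lemma DL_add (a b : Fin 2 →₀ ℕ) : DL (a + b) = DL a + DL b := by
  simp only [DL, Finsupp.add_apply, ← toLex_add]
  apply congrArg toLex
  apply Prod.ext <;> simp <;> ring

lemma td_eq {K : Type*} [CommSemiring K] (p : MvPolynomial (Fin 2) K) (hp : p ≠ 0) :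
    p.totalDegree = (ofLex (AddMonoidAlgebra.supDegree DL p)).1 := by
  obtain ⟨b, hb, hsup⟩ := AddMonoidAlgebra.exists_supDegree_mem_support DL hp
  rw [hsup]
  apply le_antisymm
  · apply Finset.sup_le
    intro m hm
    have h2 : DL m ≤ DL b := by
      rw [← hsup]; exact Finset.le_sup (f := DL) hm
    have h3 : m 0 + m 1 ≤ b 0 + b 1 := by
      rcases (Prod.Lex.le_iff).mp h2 with h | h
      · exact le_of_lt h
      · exact le_of_eq h.1
    have : (m.sum fun _ e => e) = m 0 + m 1 := by
      rw [Finsupp.sum_fintype _ _ (fun _ => rfl), Fin.sum_univ_two]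
    rw [← this] at h3; exact h3
  · have hbs : (b.sum fun _ e => e) = b 0 + b 1 := by
      rw [Finsupp.sum_fintype _ _ (fun _ => rfl), Fin.sum_univ_two]
    calc ((ofLex (DL b)).1 : ℕ) = b.sum fun _ e => e := hbs.symm
    _ ≤ p.totalDegree := le_totalDegree hb

lemma totalDegree_mul_eq' {K : Type*} [CommRing K] [IsDomain K]
    {p q : MvPolynomial (Fin 2) K} (hp : p ≠ 0) (hq : q ≠ 0) :
    (p * q).totalDegree = p.totalDegree + q.totalDegree := by
  have hlc : AddMonoidAlgebra.leadingCoeff DL p * AddMonoidAlgebra.leadingCoeff DL q ≠ 0 :=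
    mul_ne_zero ((AddMonoidAlgebra.leadingCoeff_ne_zero DL_inj).mpr hp)
      ((AddMonoidAlgebra.leadingCoeff_ne_zero DL_inj).mpr hq)
  have hs := AddMonoidAlgebra.supDegree_mul DL_inj DL_add hlc hp hq
  rw [td_eq p hp, td_eq q hq, td_eq _ (mul_ne_zero hp hq), hs]
  rfl

lemma totalDegree_map_inj {R S : Type*} [CommSemiring R] [CommSemiring S] {f : R →+* S}
    (hf : Function.Injective f) (p : MvPolynomial (Fin 2) R) :
    (MvPolynomial.map f p).totalDegree = p.totalDegree := by
  rw [MvPolynomial.totalDegree, MvPolynomial.totalDegree,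
    MvPolynomial.support_map_of_injective p hf]

lemma eq_C_of_td_zero {R : Type*} [CommSemiring R] (q : MvPolynomial (Fin 2) R)
    (h : q.totalDegree = 0) : q = C (coeff 0 q) := by
  ext m
  rw [coeff_C]
  by_cases hm : m = 0
  · subst hm; simp
  · rw [if_neg (fun h' => hm h'.symm)]
    by_contra hne
    have hmem : m ∈ q.support := by
      rw [mem_support_iff]; exact hne
    have := (totalDegree_eq_zero_iff (Fin 2) q).mp h m hmem
    exact hm (Finsupp.ext fun i => this i)

lemma isUnit_td_zero {K : Type*} [Field K] {u : MvPolynomial (Fin 2) K} (h : IsUnit u) :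
    u.totalDegree = 0 := by
  obtain ⟨w, hw⟩ := h.exists_right_inv
  have hu : u ≠ 0 := by rintro rfl; simp at hw
  have hw0 : w ≠ 0 := by rintro rfl; simp at hw
  have := totalDegree_mul_eq' hu hw0
  rw [hw, totalDegree_one] at this
  omega

lemma td_pos_of_irred {K : Type*} [Field K] {q : MvPolynomial (Fin 2) K}
    (hq : Irreducible q) : 0 < q.totalDegree := by
  rcases Nat.eq_zero_or_pos q.totalDegree with h | h
  · exfalso
    have hC := eq_C_of_td_zero q h
    have hc0 : coeff 0 q ≠ 0 := by
      intro h0; rw [h0, map_zero] at hC; exact hq.ne_zero hC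
    exact hq.not_isUnit (by
      rw [hC]
      exact isUnit_iff_exists_inv.mpr ⟨C (coeff 0 q)⁻¹, by
        rw [← C_mul, mul_inv_cancel₀ hc0, C_1]⟩)
  · exact h

/-! ### Combinatorial balancing lemma -/

lemma comb_aux {α : Type*} (f : α → ℕ) (S : ℕ) :
    ∀ M : Multiset α, (∀ x ∈ M, 3 * f x ≤ S) → S ≤ 3 * (M.map f).sum →
      ∃ N ≤ M, S ≤ 3 * (N.map f).sum ∧ 3 * (N.map f).sum ≤ 2 * S := by
  intro M
  induction M using Multiset.induction with
  | empty =>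
    intro _ hsum
    refine ⟨0, le_refl _, ?_, ?_⟩ <;> simp_all
  | cons a M ih =>
    intro hall hsum
    by_cases h : S ≤ 3 * (M.map f).sum
    · obtain ⟨N, hN, h1, h2⟩ := ih (fun x hx => hall x (Multiset.mem_cons_of_mem hx)) h
      exact ⟨N, hN.trans (Multiset.le_cons_self M a), h1, h2⟩
    · refine ⟨a ::ₘ M, le_refl _, ?_, ?_⟩
      · simpa using hsum
      · have ha := hall a (Multiset.mem_cons_self a M)
        simp only [Multiset.map_cons, Multiset.sum_cons] at *
        omega

lemma comb {α : Type*} (f : α → ℕ) (M : Multiset α)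
    (hhalf : ∀ a ∈ M, 2 * f a ≤ (M.map f).sum) :
    ∃ N ≤ M, (M.map f).sum ≤ 3 * (N.map f).sum ∧
      3 * (N.map f).sum ≤ 2 * (M.map f).sum := by
  set S := (M.map f).sum with hS
  by_cases hex : ∃ a ∈ M, S < 3 * f a
  · obtain ⟨a, haM, ha⟩ := hex
    refine ⟨{a}, ?_, ?_, ?_⟩
    · exact Multiset.singleton_le.mpr haM
    · simp only [Multiset.map_singleton, Multiset.sum_singleton]
      omega
    · have := hhalf a haM
      simp only [Multiset.map_singleton, Multiset.sum_singleton]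
      omega
  · push_neg at hex
    exact comb_aux f S M hex (by omega)

/-! ### Multiset product degrees -/

lemma prod_ne_zero_td {K : Type*} [Field K] (M : Multiset (MvPolynomial (Fin 2) K))
    (h : ∀ q ∈ M, q ≠ 0) :
    M.prod ≠ 0 ∧ M.prod.totalDegree = (M.map MvPolynomial.totalDegree).sum := by
  induction M using Multiset.induction with
  | empty => simp
  | cons a M ih =>
    have ha : a ≠ 0 := h a (Multiset.mem_cons_self a M)
    obtain ⟨h1, h2⟩ := ih (fun q hq => h q (Multiset.mem_cons_of_mem hq))
    rw [Multiset.prod_cons, Multiset.map_cons, Multiset.sum_cons]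
    exact ⟨mul_ne_zero ha h1, by rw [totalDegree_mul_eq' ha h1, h2]⟩

/-! ### Descent: divisibility over a field extension descends -/

lemma descent {F K : Type*} [Field F] [Field K] [Algebra F K]
    {r g : MvPolynomial (Fin 2) F}
    (h : MvPolynomial.map (algebraMap F K) r ∣ MvPolynomial.map (algebraMap F K) g) :
    r ∣ g := by
  obtain ⟨π, hπ⟩ := LinearMap.exists_leftInverse_of_injective (Algebra.linearMap F K)
    (LinearMap.ker_eq_bot.mpr (algebraMap F K).injective)
  obtain ⟨t, ht⟩ := h
  classical
  set Pr : MvPolynomial (Fin 2) K → MvPolynomial (Fin 2) F :=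
    fun u => ∑ m ∈ u.support, monomial m (π (coeff m u)) with hPr
  have coeffPr : ∀ (u : MvPolynomial (Fin 2) K) (m : Fin 2 →₀ ℕ),
      coeff m (Pr u) = π (coeff m u) := by
    intro u m
    rw [hPr]
    simp only [coeff_sum, coeff_monomial]
    rw [Finset.sum_ite_eq' u.support m (fun m' => π (coeff m' u))]
    by_cases hm : m ∈ u.support
    · rw [if_pos hm]
    · rw [if_neg hm, notMem_support_iff.mp hm, map_zero]
  have key : ∀ (s : MvPolynomial (Fin 2) F) (u : MvPolynomial (Fin 2) K),
      Pr (MvPolynomial.map (algebraMap F K) s * u) = s * Pr u := by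
    intro s u
    apply MvPolynomial.ext
    intro m
    rw [coeffPr, coeff_mul, coeff_mul, map_sum]
    apply Finset.sum_congr rfl
    intro x _
    rw [coeff_map, coeffPr, ← Algebra.smul_def, map_smul, smul_eq_mul]
  have hg2 : Pr (MvPolynomial.map (algebraMap F K) g) = g := by
    apply MvPolynomial.ext
    intro m
    rw [coeffPr, coeff_map]
    exact LinearMap.congr_fun hπ (coeff m g)
  exact ⟨Pr t, by rw [← hg2, ht, key]⟩

/-! ### Frobenius-fixed elements lie in the prime field -/

lemma frob_fixed (p : ℕ) [Fact p.Prime] {K : Type*} [Field K] [Algebra (ZMod p) K]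
    (a : K) (h : a ^ p = a) : a ∈ Set.range (algebraMap (ZMod p) K) := by
  classical
  set P : Polynomial K := Polynomial.X ^ p - Polynomial.X with hP
  have hp1 : 1 < p := (Fact.out : p.Prime).one_lt
  have hdeg : P.natDegree = p := FiniteField.X_pow_card_sub_X_natDegree_eq K hp1
  have hP0 : P ≠ 0 := FiniteField.X_pow_card_sub_X_ne_zero K hp1
  have hroot : ∀ c : ZMod p, (algebraMap (ZMod p) K c) ∈ P.roots := by
    intro c
    rw [Polynomial.mem_roots hP0]
    simp only [hP, Polynomial.IsRoot, Polynomial.eval_sub, Polynomial.eval_pow,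
      Polynomial.eval_X]
    rw [← map_pow, ZMod.pow_card, sub_self]
  have haroot : a ∈ P.roots := by
    rw [Polynomial.mem_roots hP0]
    simp only [hP, Polynomial.IsRoot, Polynomial.eval_sub, Polynomial.eval_pow,
      Polynomial.eval_X]
    rw [h, sub_self]
  by_contra hmem
  set S : Finset K := Finset.univ.image (algebraMap (ZMod p) K) with hSdef
  have hScard : S.card = p := by
    rw [hSdef, Finset.card_image_of_injective _ (algebraMap (ZMod p) K).injective,
      Finset.card_univ, ZMod.card]
  have haS : a ∉ S := by
    intro haS
    obtain ⟨c, _, hc⟩ := Finset.mem_image.mp haS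
    exact hmem ⟨c, hc⟩
  have hsub : insert a S ⊆ P.roots.toFinset := by
    intro x hx
    rcases Finset.mem_insert.mp hx with rfl | hxS
    · exact Multiset.mem_toFinset.mpr haroot
    · obtain ⟨c, _, hc⟩ := Finset.mem_image.mp hxS
      exact Multiset.mem_toFinset.mpr (hc ▸ hroot c)
  have h1 : p + 1 ≤ P.roots.toFinset.card := by
    have := Finset.card_le_card hsub
    rwa [Finset.card_insert_of_notMem haS, hScard] at this
  have h2 : P.roots.toFinset.card ≤ p := by
    calc P.roots.toFinset.card ≤ Multiset.card P.roots := Multiset.toFinset_card_le _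
    _ ≤ P.natDegree := Polynomial.card_roots' P
    _ = p := hdeg
  omega

/-! ### All coefficients in the range of an injective ring hom -/

lemma exists_preimage {R S : Type*} [CommSemiring R] [CommSemiring S] (f : R →+* S)
    (q : MvPolynomial (Fin 2) S) (h : ∀ m, coeff m q ∈ Set.range f) :
    ∃ r : MvPolynomial (Fin 2) R, MvPolynomial.map f r = q := by
  classical
  refine ⟨∑ m ∈ q.support, monomial m ((h m).choose), ?_⟩
  rw [map_sum]
  have : ∀ m ∈ q.support,
      MvPolynomial.map f (monomial m ((h m).choose)) = monomial m (coeff m q) := by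
    intro m _
    rw [map_monomial, (h m).choose_spec]
  rw [Finset.sum_congr rfl this, support_sum_monomial_coeff]

/-! ### Key lemma: every irreducible factor of `map g` has degree at most half -/

lemma key_half (p : ℕ) [Fact p.Prime]
    (g : MvPolynomial (Fin 2) (ZMod p)) (hg : 0 < g.totalDegree)
    (habs : ¬ ∃ q : MvPolynomial (Fin 2) (ZMod p), 0 < q.totalDegree ∧ q ∣ g ∧
      Irreducible (MvPolynomial.map (algebraMap (ZMod p) (AlgebraicClosure (ZMod p))) q))
    (q : MvPolynomial (Fin 2) (AlgebraicClosure (ZMod p))) (hq : Irreducible q)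
    (hdvd : q ∣ MvPolynomial.map (algebraMap (ZMod p) (AlgebraicClosure (ZMod p))) g) :
    2 * q.totalDegree ≤
      (MvPolynomial.map (algebraMap (ZMod p) (AlgebraicClosure (ZMod p))) g).totalDegree := by
  classical
  set K := AlgebraicClosure (ZMod p) with hK
  set G := MvPolynomial.map (algebraMap (ZMod p) K) g with hGdef
  have hp1 : 1 < p := (Fact.out : p.Prime).one_lt
  haveI : ExpChar K p := by
    haveI : CharP K p := inferInstance
    exact ExpChar.prime Fact.out
  -- Frobenius as a ring equiv
  have hsurj : Function.Surjective (frobenius K p) := by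
    intro a
    obtain ⟨b, hb⟩ := IsAlgClosed.exists_pow_nat_eq a (n := p) (by omega)
    exact ⟨b, by rw [frobenius_def, hb]⟩
  set σe : K ≃+* K := RingEquiv.ofBijective (frobenius K p)
    ⟨(frobenius K p).injective, hsurj⟩ with hσe
  have hσe_apply : ∀ a : K, σe a = a ^ p := fun a => frobenius_def p a
  set Sg : MvPolynomial (Fin 2) K ≃+* MvPolynomial (Fin 2) K :=
    MvPolynomial.mapEquiv (Fin 2) σe with hSg
  have hSg_apply : ∀ u : MvPolynomial (Fin 2) K, Sg u = MvPolynomial.map (σe : K →+* K) u :=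
    fun u => rfl
  have hcomp : (σe : K →+* K).comp (algebraMap (ZMod p) K) = algebraMap (ZMod p) K := by
    ext c
    show σe ((algebraMap (ZMod p) K) c) = (algebraMap (ZMod p) K) c
    rw [hσe_apply, ← map_pow, ZMod.pow_card]
  have hSgG : Sg G = G := by
    rw [hSg_apply, hGdef, MvPolynomial.map_map, hcomp]
  have hq0 : q ≠ 0 := hq.ne_zero
  have hG0 : G ≠ 0 := by
    intro h0
    have := totalDegree_map_inj (algebraMap (ZMod p) K).injective g
    rw [← hGdef, h0, totalDegree_zero] at this
    omega
  set q' : MvPolynomial (Fin 2) K := Sg q with hq'def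
  have hq' : Irreducible q' := by
    rw [hq'def]
    exact (MulEquiv.irreducible_iff (Sg : MvPolynomial (Fin 2) K ≃* MvPolynomial (Fin 2) K)).mpr hq
  have hq'dvd : q' ∣ G := by
    obtain ⟨t, ht⟩ := hdvd
    exact ⟨Sg t, by rw [← hSgG, ht, map_mul]⟩
  have hq'deg : q'.totalDegree = q.totalDegree := by
    rw [hq'def, hSg_apply]
    exact totalDegree_map_inj σe.injective q
  by_cases hass : Associated q q'
  · -- conjugate factor is associated: produce an absolutely irreducible factor over F_p
    exfalso
    obtain ⟨w, hw⟩ := hass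
    have hwu : IsUnit (w : MvPolynomial (Fin 2) K) := w.isUnit
    have hwC := eq_C_of_td_zero _ (isUnit_td_zero hwu)
    set c : K := coeff 0 (w : MvPolynomial (Fin 2) K) with hc
    have hc0 : c ≠ 0 := by
      intro h0
      rw [h0, map_zero] at hwC
      exact hwu.ne_zero hwC
    obtain ⟨b, hb⟩ := IsAlgClosed.exists_pow_nat_eq (c⁻¹ : K) (n := p - 1) (by omega)
    have hb0 : b ≠ 0 := by
      intro h0
      rw [h0, zero_pow (by omega : p - 1 ≠ 0)] at hb
      exact inv_ne_zero hc0 hb.symm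
    have hbpc : b ^ p * c = b := by
      have : b ^ p = b ^ (p - 1) * b := by
        rw [← pow_succ]
        congr 1
        omega
      rw [this, hb]
      rw [mul_comm c⁻¹ b, mul_assoc, inv_mul_cancel₀ hc0, mul_one]
    set q'' : MvPolynomial (Fin 2) K := C b * q with hq''def
    have hSgq'' : Sg q'' = q'' := by
      rw [hq''def, map_mul]
      have h1 : Sg (C b) = C (b ^ p) := by
        rw [hSg_apply, MvPolynomial.map_C]
        exact congrArg C (hσe_apply b)
      have h2 : Sg q = C c * q := by
        rw [← hq'def, ← hw, hwC]; ring
      rw [h1, h2, ← mul_assoc, ← C_mul, mul_comm (b^p) c, mul_comm c (b^p), hbpc]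
    have hfix : ∀ m, coeff m q'' ∈ Set.range (algebraMap (ZMod p) K) := by
      intro m
      apply frob_fixed p
      have h' : coeff m (Sg q'') = coeff m q'' := by rw [hSgq'']
      rw [hSg_apply, coeff_map] at h'
      calc coeff m q'' ^ p = σe (coeff m q'') := (hσe_apply _).symm
        _ = coeff m q'' := h' 

    obtain ⟨r, hr⟩ := exists_preimage (algebraMap (ZMod p) K) q'' hfix
    have hCbu : IsUnit (C b : MvPolynomial (Fin 2) K) :=
      isUnit_iff_exists_inv.mpr ⟨C b⁻¹, by rw [← C_mul, mul_inv_cancel₀ hb0, C_1]⟩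
    have hq''irr : Irreducible q'' := by
      rw [hq''def]
      exact ((Associated.irreducible · hq)) ⟨hCbu.unit, by rw [IsUnit.unit_spec, mul_comm]⟩
    have hq''dvd : q'' ∣ G := by
      obtain ⟨t, ht⟩ := hdvd
      refine ⟨C b⁻¹ * t, ?_⟩
      rw [ht, hq''def]
      rw [show (C b * q) * (C b⁻¹ * t) = (C b * C b⁻¹) * (q * t) by ring, ← C_mul,
        mul_inv_cancel₀ hb0, C_1, one_mul]
    apply habs
    refine ⟨r, ?_, ?_, ?_⟩
    · have : r.totalDegree = q''.totalDegree :=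
        (totalDegree_map_inj (algebraMap (ZMod p) K).injective r).symm.trans (by rw [hr])
      rw [this, hq''def, totalDegree_mul_eq' (fun h0 => hb0 (by
        have := congrArg (coeff 0) h0
        simpa using this)) hq0, totalDegree_C]
      have := td_pos_of_irred hq
      omega
    · apply descent (K := K)
      rw [hr, ← hGdef]
      exact hq''dvd.trans dvd_rfl
    · show Irreducible (MvPolynomial.map (algebraMap (ZMod p) K) r)
      rw [hr]
      exact hq''irr
  · -- not associated: q * q' divides G
    have hq'prime : Prime q' := UniqueFactorizationMonoid.irreducible_iff_prime.mp hq'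
    obtain ⟨t, ht⟩ := hdvd
    have hq't : q' ∣ q * t := ht ▸ hq'dvd
    rcases hq'prime.2.2 q t hq't with h | h
    · exact absurd (hq'.associated_of_dvd hq h).symm hass
    · obtain ⟨s, hs⟩ := h
      have hG : G = q * q' * s := by rw [ht, hs]; ring
      have hq'0 : q' ≠ 0 := hq'.ne_zero
      have hs0 : s ≠ 0 := by
        intro h0
        rw [h0, mul_zero] at hG
        exact hG0 hG
      have := totalDegree_mul_eq' (mul_ne_zero hq0 hq'0) hs0
      rw [← hG, totalDegree_mul_eq' hq0 hq'0, hq'deg] at this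
      omega

/-- Let `g ∈ F_p[x,y]` be nonconstant with no absolutely irreducible factor over `F_p`.
Then over the algebraic closure `K` of `F_p` there is a factorization `g = u·v` into
nonconstant polynomials with `|deg u - deg v| ≤ deg g / 3` (i.e. `3·|deg u - deg v| ≤
deg g`); in particular `deg u · deg v ≥ (2/9)·deg g²` (i.e. `9·deg u·deg v ≥ 2·deg g²`). -/
theorem stmt16 (p : ℕ) [Fact p.Prime] (hp : Odd p)
    (g : MvPolynomial (Fin 2) (ZMod p)) (hg : 0 < g.totalDegree)
    (habs : ¬ ∃ q : MvPolynomial (Fin 2) (ZMod p), 0 < q.totalDegree ∧ q ∣ g ∧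
      Irreducible (MvPolynomial.map (algebraMap (ZMod p) (AlgebraicClosure (ZMod p))) q)) :
    ∃ u v : MvPolynomial (Fin 2) (AlgebraicClosure (ZMod p)),
      MvPolynomial.map (algebraMap (ZMod p) (AlgebraicClosure (ZMod p))) g = u * v ∧
      0 < u.totalDegree ∧ 0 < v.totalDegree ∧
      3 * |(u.totalDegree : ℤ) - (v.totalDegree : ℤ)| ≤ (g.totalDegree : ℤ) ∧
      2 * (g.totalDegree : ℤ) ^ 2 ≤ 9 * ((u.totalDegree : ℤ) * (v.totalDegree : ℤ)) := by
  classical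
  set K := AlgebraicClosure (ZMod p) with hK
  set G := MvPolynomial.map (algebraMap (ZMod p) K) g with hGdef
  have hGdeg : G.totalDegree = g.totalDegree :=
    totalDegree_map_inj (algebraMap (ZMod p) K).injective g
  have hG0 : G ≠ 0 := by
    intro h0
    rw [h0, totalDegree_zero] at hGdeg
    omega
  set M := UniqueFactorizationMonoid.factors G with hM
  obtain ⟨w, hw⟩ := UniqueFactorizationMonoid.factors_prod hG0
  have hirr : ∀ x ∈ M, Irreducible x := fun x hx =>
    UniqueFactorizationMonoid.irreducible_of_factor x hx
  have hne : ∀ x ∈ M, x ≠ 0 := fun x hx => (hirr x hx).ne_zero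
  obtain ⟨hMprod0, hMdeg⟩ := prod_ne_zero_td M hne
  have hw' : M.prod * (w : MvPolynomial (Fin 2) K) = G := hw
  have hsum : (M.map MvPolynomial.totalDegree).sum = g.totalDegree := by
    have hw0 : (w : MvPolynomial (Fin 2) K) ≠ 0 := w.isUnit.ne_zero
    have h2 := totalDegree_mul_eq' hMprod0 hw0
    rw [isUnit_td_zero w.isUnit, add_zero, hw', hGdeg, hMdeg] at h2
    exact h2.symm
  -- every factor has degree at most half
  have hhalf : ∀ x ∈ M, 2 * x.totalDegree ≤ (M.map MvPolynomial.totalDegree).sum := by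
    intro x hx
    rw [hsum, ← hGdeg]
    exact key_half p g hg habs x (hirr x hx)
      (UniqueFactorizationMonoid.dvd_of_mem_factors hx)
  obtain ⟨N, hNM, h1, h2⟩ := comb MvPolynomial.totalDegree M hhalf
  rw [hsum] at h1 h2
  -- construct u and v
  have hMsplit : N + (M - N) = M := by
    rw [add_comm]; exact tsub_add_cancel_of_le hNM
  set u : MvPolynomial (Fin 2) K := N.prod * (w : MvPolynomial (Fin 2) K) with hu
  set v : MvPolynomial (Fin 2) K := (M - N).prod with hv
  have hNne : ∀ x ∈ N, x ≠ 0 := fun x hx => hne x (Multiset.mem_of_le hNM hx)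
  have hMNne : ∀ x ∈ M - N, x ≠ 0 := fun x hx => hne x (Multiset.mem_of_le (tsub_le_self) hx)
  obtain ⟨hN0, hNdeg⟩ := prod_ne_zero_td N hNne
  obtain ⟨hMN0, hMNdeg⟩ := prod_ne_zero_td (M - N) hMNne
  have hw0 : (w : MvPolynomial (Fin 2) K) ≠ 0 := w.isUnit.ne_zero
  set tN : ℕ := (N.map MvPolynomial.totalDegree).sum with htN
  set tMN : ℕ := ((M - N).map MvPolynomial.totalDegree).sum with htMN
  have hudeg : u.totalDegree = tN := by
    rw [hu, totalDegree_mul_eq' hN0 hw0, isUnit_td_zero w.isUnit, add_zero, hNdeg]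
  have hvdeg : v.totalDegree = tMN := by
    rw [hv, hMNdeg]
  have haddsum : tN + tMN = g.totalDegree := by
    rw [htN, htMN, ← hsum, ← hMsplit, Multiset.map_add, Multiset.sum_add]
    rw [hMsplit]
  have hfact : G = u * v := by
    rw [hu, hv, ← hw', ← hMsplit, Multiset.prod_add]
    rw [hMsplit]
    ring
  refine ⟨u, v, hfact, ?_, ?_, ?_, ?_⟩
  · omega
  · omega
  · rw [hudeg, hvdeg]
    rcases abs_cases ((tN : ℤ) - (tMN : ℤ)) with ⟨he, _⟩ | ⟨he, _⟩ <;> rw [he] <;> omega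
  · rw [hudeg, hvdeg]
    have hab : (tN : ℤ) + (tMN : ℤ) = (g.totalDegree : ℤ) := by exact_mod_cast haddsum
    have h1' : (g.totalDegree : ℤ) ≤ 3 * (tN : ℤ) := by exact_mod_cast h1
    have h2' : (3 : ℤ) * (tN : ℤ) ≤ 2 * (g.totalDegree : ℤ) := by exact_mod_cast h2
    nlinarith [mul_nonneg (by linarith : (0:ℤ) ≤ 3 * (tN : ℤ) - (g.totalDegree : ℤ))
      (by linarith : (0:ℤ) ≤ 2 * (g.totalDegree : ℤ) - 3 * (tN : ℤ))]
end

section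
/- Let m ≥ 3 with m not divisible by p and m ≢ 1 (mod p), and let K be an algebraic closure of F_p. Then the singular points of h in K² are exactly the points (x₀,y₀) with x₀ ≠ y₀ and (x₀+1)^{m−1} = (y₀+1)^{m−1} = x₀^{m−1} = y₀^{m−1}, and each such point has multiplicity m_t(h) = 2; moreover the projective closure of the curve h = 0 has no singular point on the line at infinity. -/
open MvPolynomial

section Helpers

lemma eval_aeval' {K : Type*} [CommSemiring K] {n n' : ℕ} (φ : Fin n → MvPolynomial (Fin n') K)
    (v : Fin n' → K) (g : MvPolynomial (Fin n) K) :
    eval v (aeval φ g) = eval (fun i => eval v (φ i)) g := by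
  induction g using MvPolynomial.induction_on with
  | C a => simp
  | add p q hp hq => simp only [map_add, hp, hq]
  | mul_X p i hp => simp only [map_mul, aeval_X, eval_mul, hp, eval_X]

lemma ccoeff_pderiv {K : Type*} [CommSemiring K] {n : ℕ} (i : Fin n) (q : MvPolynomial (Fin n) K) :
    coeff (Finsupp.single i 1) q = constantCoeff (pderiv i q) := by
  induction q using MvPolynomial.induction_on' with
  | monomial s a =>
    rw [pderiv_monomial, constantCoeff_monomial, coeff_monomial]
    by_cases hs : s = Finsupp.single i 1
    · subst hs; simp
    · rw [if_neg hs]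
      by_cases h0 : s - Finsupp.single i 1 = 0
      · rw [if_pos h0]
        rcases Nat.eq_zero_or_pos (s i) with h | h
        · simp [h]
        · exfalso; apply hs
          ext j
          have := Finsupp.ext_iff.mp h0 j
          simp only [Finsupp.tsub_apply, Finsupp.coe_zero, Pi.zero_apply] at this
          by_cases hj : j = i
          · subst hj; simp only [Finsupp.single_eq_same] at this ⊢; omega
          · simp only [Finsupp.single_apply, if_neg (Ne.symm hj)] at this ⊢; omega
      · simp [h0]
  | add p q hp hq => simp [hp, hq, map_add]

lemma coeff_pderiv' {K : Type*} [CommSemiring K] {n : ℕ} (i : Fin n) (d : Fin n →₀ ℕ)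
    (q : MvPolynomial (Fin n) K) :
    coeff d (pderiv i q) = (d i + 1 : ℕ) * coeff (d + Finsupp.single i 1) q := by
  induction q using MvPolynomial.induction_on' with
  | monomial s a =>
    rw [pderiv_monomial, coeff_monomial, coeff_monomial]
    by_cases hs : s = d + Finsupp.single i 1
    · subst hs
      rw [if_pos (by simp), if_pos rfl]
      push_cast
      simp [mul_comm]
    · rw [if_neg hs, mul_zero]
      by_cases h0 : s - Finsupp.single i 1 = d
      · rw [if_pos h0]
        rcases Nat.eq_zero_or_pos (s i) with h | h
        · simp [h]
        · exfalso; apply hs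
          ext j
          have := Finsupp.ext_iff.mp h0 j
          simp only [Finsupp.tsub_apply] at this
          by_cases hj : j = i
          · subst hj
            simp only [Finsupp.coe_add, Pi.add_apply, Finsupp.single_eq_same] at this ⊢
            omega
          · simp only [Finsupp.single_apply, if_neg (Ne.symm hj), Finsupp.coe_add,
              Pi.add_apply] at this ⊢
            omega
      · simp [h0]
  | add p q hp hq => simp [hp, hq, map_add, mul_add]

lemma fdeg2 (d : Fin 2 →₀ ℕ) : d.degree = d 0 + d 1 := by
  rw [Finsupp.degree_apply, Finset.sum_subset (Finset.subset_univ d.support)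
    (by intro x _ hx; simpa using Finsupp.notMem_support_iff.mp hx), Fin.sum_univ_two]

lemma fdeg3 (d : Fin 3 →₀ ℕ) : d.degree = d 0 + d 1 + d 2 := by
  rw [Finsupp.degree_apply, Finset.sum_subset (Finset.subset_univ d.support)
    (by intro x _ hx; simpa using Finsupp.notMem_support_iff.mp hx), Fin.sum_univ_three]

lemma fsingle_deg (i : Fin 2) (k : ℕ) : (Finsupp.single i k).degree = k := by
  rw [fdeg2]
  fin_cases i <;> simp

lemma degree_one_classify (d : Fin 2 →₀ ℕ) (h : d.degree = 1) :
    d = Finsupp.single 0 1 ∨ d = Finsupp.single 1 1 := by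
  rw [fdeg2] at h
  rcases Nat.eq_zero_or_pos (d 0) with h0 | h0
  · right; ext j; fin_cases j <;> simp [Finsupp.single_apply] <;> omega
  · left; ext j; fin_cases j <;> simp [Finsupp.single_apply] <;> omega

lemma dehom_mono {R : Type*} [CommRing R] (v : Fin 3 →₀ ℕ) (c : R) :
    aeval ![(X 0 : MvPolynomial (Fin 2) R), X 1, 1] (monomial v c) =
      monomial (Finsupp.single 0 (v 0) + Finsupp.single 1 (v 1)) c := by
  rw [aeval_monomial, monomial_eq]
  rw [Finsupp.prod_fintype _ _ (fun i => pow_zero _), Finsupp.prod_fintype _ _ (fun i => pow_zero _)]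
  rw [Fin.prod_univ_three, Fin.prod_univ_two]
  simp [Finsupp.single_apply, algebraMap_eq]

lemma dehom_eq_zero {R : Type*} [CommRing R] {n : ℕ} {P : MvPolynomial (Fin 3) R}
    (hP : P.IsHomogeneous n)
    (h0 : aeval ![(X 0 : MvPolynomial (Fin 2) R), X 1, 1] P = 0) : P = 0 := by
  apply MvPolynomial.ext
  intro u
  rw [coeff_zero]
  by_cases hu : u ∈ P.support
  · by_cases hdeg : u.degree = n
    · have hudeg := hdeg
      set d : Fin 2 →₀ ℕ := Finsupp.single 0 (u 0) + Finsupp.single 1 (u 1) with hd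
      have h0' : coeff d (aeval ![(X 0 : MvPolynomial (Fin 2) R), X 1, 1] P) = 0 := by
        rw [h0, coeff_zero]
      rw [P.as_sum, map_sum] at h0'
      have hsum : ∀ v ∈ P.support,
          coeff d (aeval ![(X 0 : MvPolynomial (Fin 2) R), X 1, 1] (monomial v (coeff v P))) =
            if Finsupp.single 0 (v 0) + Finsupp.single 1 (v 1) = d then coeff v P else 0 := by
        intro v _
        rw [dehom_mono, coeff_monomial]
      rw [coeff_sum] at h0'
      rw [Finset.sum_congr rfl hsum] at h0'
      rw [Finset.sum_eq_single u ?_ ?_] at h0'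
      · rwa [if_pos rfl] at h0'
      · intro v hv hvu
        rw [if_neg]
        intro hπ
        apply hvu
        have hvdeg : v.degree = n := by
          by_contra hc
          exact (mem_support_iff.mp hv) (hP.coeff_eq_zero hc)
        have h00 := Finsupp.ext_iff.mp hπ 0
        have h11 := Finsupp.ext_iff.mp hπ 1
        simp only [hd, Finsupp.add_apply, Finsupp.single_apply] at h00 h11
        norm_num at h00 h11
        rw [fdeg3] at hvdeg hudeg
        have h22 : v 2 = u 2 := by omega
        ext j
        fin_cases j
        · exact h00
        · exact h11
        · exact h22
      · intro hns
        rw [if_pos rfl]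
        exact notMem_support_iff.mp hns
    · exact hP.coeff_eq_zero hdeg
  · exact notMem_support_iff.mp hu

end Helpers

section ShiftLemmas

lemma pderiv_shiftAt {K : Type*} [CommRing K] (g : MvPolynomial (Fin 2) K) (a b : K) (i : Fin 2) :
    pderiv i (shiftAt g a b) = shiftAt (pderiv i g) a b := by
  unfold shiftAt
  induction g using MvPolynomial.induction_on with
  | C c => simp
  | add p q hp hq => simp only [map_add, hp, hq]
  | mul_X p j hp =>
      simp only [map_mul, aeval_X, pderiv_mul, hp, map_add, pderiv_X, pderiv_C, add_zero]
      rcases eq_or_ne i j with rfl | hij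
      · simp [Pi.single_eq_same]
      · simp [Pi.single_eq_of_ne (Ne.symm hij), Pi.single_eq_of_ne hij]

lemma constantCoeff_shiftAt {K : Type*} [CommRing K] (g : MvPolynomial (Fin 2) K) (a b : K) :
    constantCoeff (shiftAt g a b) = eval ![a, b] g := by
  rw [← eval_zero', shiftAt, eval_aeval']
  have hv : (fun i => eval (fun _ => (0:K)) (X i + C (![a, b] i))) = ![a, b] := by
    funext i; simp
  rw [hv]

lemma coeff_zero_shiftAt {K : Type*} [CommRing K] (g : MvPolynomial (Fin 2) K) (a b : K) :
    coeff 0 (shiftAt g a b) = eval ![a, b] g := by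
  rw [← constantCoeff_eq, constantCoeff_shiftAt]

lemma coeff_single_shiftAt {K : Type*} [CommRing K] (g : MvPolynomial (Fin 2) K) (a b : K)
    (i : Fin 2) :
    coeff (Finsupp.single i 1) (shiftAt g a b) = eval ![a, b] (pderiv i g) := by
  rw [ccoeff_pderiv, pderiv_shiftAt, constantCoeff_shiftAt]

lemma coeff_double_shiftAt {K : Type*} [CommRing K] (g : MvPolynomial (Fin 2) K) (a b : K) :
    (2 : K) * coeff (Finsupp.single 0 2) (shiftAt g a b) =
      eval ![a, b] (pderiv 0 (pderiv 0 g)) := by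
  rw [← constantCoeff_shiftAt, ← pderiv_shiftAt, ← pderiv_shiftAt, ← ccoeff_pderiv,
    coeff_pderiv']
  have : Finsupp.single (0 : Fin 2) 1 + Finsupp.single 0 1 = Finsupp.single 0 2 := by
    rw [← Finsupp.single_add]
  rw [this]
  push_cast [Finsupp.single_eq_same]
  ring

lemma homComp0_shiftAt {K : Type*} [CommRing K] (g : MvPolynomial (Fin 2) K) (a b : K) :
    homogeneousComponent 0 (shiftAt g a b) = C (eval ![a, b] g) := by
  rw [homogeneousComponent_zero, coeff_zero_shiftAt]

lemma homComp1_shiftAt_eq_zero {K : Type*} [CommRing K] {g : MvPolynomial (Fin 2) K} {a b : K}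
    (hx : eval ![a, b] (pderiv 0 g) = 0) (hy : eval ![a, b] (pderiv 1 g) = 0) :
    homogeneousComponent 1 (shiftAt g a b) = 0 := by
  apply MvPolynomial.ext
  intro d
  rw [coeff_homogeneousComponent, coeff_zero]
  split_ifs with hd
  · rcases degree_one_classify d hd with rfl | rfl
    · rw [coeff_single_shiftAt, hx]
    · rw [coeff_single_shiftAt, hy]
  · rfl

lemma multAt_eq_two {K : Type*} [Field K] {g : MvPolynomial (Fin 2) K} {a b : K}
    (h0 : eval ![a, b] g = 0) (hx : eval ![a, b] (pderiv 0 g) = 0)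
    (hy : eval ![a, b] (pderiv 1 g) = 0)
    (hxx : eval ![a, b] (pderiv 0 (pderiv 0 g)) ≠ 0) :
    multAt g a b = 2 := by
  apply IsLeast.csInf_eq
  constructor
  · intro hcontra
    apply hxx
    rw [← coeff_double_shiftAt]
    have : coeff (Finsupp.single 0 2) (shiftAt g a b) =
        coeff (Finsupp.single 0 2) (homogeneousComponent 2 (shiftAt g a b)) := by
      rw [coeff_homogeneousComponent, if_pos (fsingle_deg 0 2)]
    rw [this, hcontra, coeff_zero, mul_zero]
  · intro n hn
    by_contra hlt
    interval_cases n
    · exact hn (by rw [homComp0_shiftAt, h0, map_zero])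
    · exact hn (homComp1_shiftAt_eq_zero hx hy)

lemma two_le_multAt {K : Type*} [Field K] {g : MvPolynomial (Fin 2) K} {a b : K}
    (h : 2 ≤ multAt g a b) :
    eval ![a, b] g = 0 ∧ eval ![a, b] (pderiv 1 g) = 0 := by
  unfold multAt at h
  have h0 : homogeneousComponent 0 (shiftAt g a b) = 0 := by
    by_contra hc
    have hc' : (0:ℕ) ∈ {n : ℕ | homogeneousComponent n (shiftAt g a b) ≠ 0} := hc
    have := Nat.sInf_le hc'
    omega
  have h1 : homogeneousComponent 1 (shiftAt g a b) = 0 := by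
    by_contra hc
    have hc' : (1:ℕ) ∈ {n : ℕ | homogeneousComponent n (shiftAt g a b) ≠ 0} := hc
    have := Nat.sInf_le hc'
    omega
  constructor
  · have := homComp0_shiftAt g a b
    rw [h0] at this
    exact (C_eq_zero.mp this.symm)
  · rw [← coeff_single_shiftAt]
    have : coeff (Finsupp.single 1 1) (shiftAt g a b) =
        coeff (Finsupp.single 1 1) (homogeneousComponent 1 (shiftAt g a b)) := by
      rw [coeff_homogeneousComponent, if_pos (fsingle_deg 1 1)]
    rw [this, h1, coeff_zero]

end ShiftLemmas


lemma charty {K : Type*} [Field K] (m : ℕ) (hm : 3 ≤ m) (ω : K)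
    (hmK : (m : K) ≠ 0) (hm1K : ((m - 1 : ℕ) : K) ≠ 0)
    (Q : MvPolynomial (Fin 2) K)
    (idK : (X 1) * (X 0 - 1) * Q =
      (X 0 + X 1) ^ m - X 0 ^ m - (X 1 + 1) ^ m + 1)
    (hQ0 : eval ![ω, 0] Q = 0) (hQz : eval ![ω, 0] (pderiv 1 Q) = 0) :
    False := by
  have e1 : eval ![ω, (0:K)] (pderiv 1 ((X 1) * (X 0 - 1) * Q)) = (ω - 1) * eval ![ω, 0] Q := by
    simp [pderiv_mul, pderiv_X, mul_comm]
  have e1' : eval ![ω, (0:K)] (pderiv 1 ((X 0 + X 1) ^ m - X 0 ^ m - (X 1 + 1) ^ m + 1)) =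
      (m : K) * (ω ^ (m-1) - 1) := by
    simp [pderiv_mul, pderiv_pow, pderiv_X]
    ring
  have h1 : (m : K) * (ω ^ (m-1) - 1) = 0 := by
    rw [← e1', ← idK, e1, hQ0, mul_zero]
  have hω1 : ω ^ (m - 1) = 1 := by
    rcases mul_eq_zero.mp h1 with h | h
    · exact absurd h hmK
    · exact sub_eq_zero.mp h
  -- second derivative in z
  have e2 : eval ![ω, (0:K)] (pderiv 1 (pderiv 1 ((X 1) * (X 0 - 1) * Q))) =
      2 * (ω - 1) * eval ![ω, 0] (pderiv 1 Q) := by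
    simp [pderiv_mul, pderiv_X]
    ring
  have e2' : eval ![ω, (0:K)] (pderiv 1 (pderiv 1 ((X 0 + X 1) ^ m - X 0 ^ m - (X 1 + 1) ^ m + 1))) =
      (m : K) * ((m - 1 : ℕ) : K) * (ω ^ (m-1-1) - 1) := by
    simp [pderiv_mul, pderiv_pow, pderiv_X]
    ring
  have h2 : (m : K) * ((m - 1 : ℕ) : K) * (ω ^ (m-1-1) - 1) = 0 := by
    rw [← e2', ← idK, e2, hQz, mul_zero]
  have hω2 : ω ^ (m - 1 - 1) = 1 := by
    rcases mul_eq_zero.mp h2 with h | h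
    · exact absurd h (mul_ne_zero hmK hm1K)
    · exact sub_eq_zero.mp h
  have hωeq : ω = 1 := by
    have : ω ^ (m - 1) = ω * ω ^ (m - 1 - 1) := by
      rw [← pow_succ']
      congr 1
      omega
    rw [hω1, hω2, mul_one] at this
    exact this.symm
  subst hωeq
  -- mixed derivative
  have e3 : eval ![(1:K), (0:K)] (pderiv 0 (pderiv 1 ((X 1) * (X 0 - 1) * Q))) = 0 := by
    simp [pderiv_mul, pderiv_X, hQ0, hQz]
  have e3' : eval ![(1:K), (0:K)] (pderiv 0 (pderiv 1 ((X 0 + X 1) ^ m - X 0 ^ m - (X 1 + 1) ^ m + 1))) =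
      (m : K) * ((m - 1 : ℕ) : K) := by
    simp [pderiv_mul, pderiv_pow, pderiv_X]
  have : (m : K) * ((m - 1 : ℕ) : K) = 0 := by
    rw [← e3', ← idK, e3]
  exact (mul_ne_zero hmK hm1K) this


lemma chartx {K : Type*} [Field K] (m : ℕ) (hm : 3 ≤ m) (hmK : (m : K) ≠ 0)
    (Q : MvPolynomial (Fin 2) K)
    (idK : (X 1) * (1 - X 0) * Q =
      (X 1 + 1) ^ m - 1 - (X 0 + X 1) ^ m + X 0 ^ m)
    (hQ0 : eval ![0, 0] Q = 0) : False := by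
  have hm1 : m - 1 ≠ 0 := by omega
  have e1 : eval ![(0:K), (0:K)] (pderiv 1 ((X 1) * (1 - X 0) * Q)) = 0 := by
    simp [pderiv_mul, pderiv_X, hQ0]
  have e1' : eval ![(0:K), (0:K)] (pderiv 1 ((X 1 + 1) ^ m - 1 - (X 0 + X 1) ^ m + X 0 ^ m)) =
      (m : K) := by
    simp [pderiv_mul, pderiv_pow, pderiv_X, zero_pow hm1]
  apply hmK
  rw [← e1', ← idK, e1]

lemma singmain {K : Type*} [Field K] (m : ℕ) (hm : 3 ≤ m)
    (hmK : (m : K) ≠ 0) (hm1K : ((m - 1 : ℕ) : K) ≠ 0)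
    (H : MvPolynomial (Fin 2) K)
    (hFH : ((X 0 + 1) ^ m - X 0 ^ m - (X 1 + 1) ^ m + X 1 ^ m : MvPolynomial (Fin 2) K)
      = (X 0 - X 1) * H) (a b : K) :
    (IsSingAt H a b ↔
      (a ≠ b ∧ (a + 1) ^ (m - 1) = (b + 1) ^ (m - 1) ∧
        (b + 1) ^ (m - 1) = a ^ (m - 1) ∧ a ^ (m - 1) = b ^ (m - 1))) ∧
    (IsSingAt H a b → (a - b) * eval ![a, b] (pderiv 0 (pderiv 0 H)) =
        (m : K) * ((m - 1 : ℕ) : K) * ((a + 1) ^ (m - 1 - 1) - a ^ (m - 1 - 1)) ∧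
        (m : K) * ((m - 1 : ℕ) : K) * ((a + 1) ^ (m - 1 - 1) - a ^ (m - 1 - 1)) ≠ 0) := by
  have powm : ∀ x : K, x ^ m = x ^ (m - 1) * x := by
    intro x
    conv_lhs => rw [show m = (m - 1) + 1 by omega]
    rw [pow_succ]
  have powm1 : ∀ x : K, x ^ (m - 1) = x ^ (m - 1 - 1) * x := by
    intro x
    conv_lhs => rw [show m - 1 = (m - 1 - 1) + 1 by omega]
    rw [pow_succ]
  set F : MvPolynomial (Fin 2) K := (X 0 + 1) ^ m - X 0 ^ m - (X 1 + 1) ^ m + X 1 ^ m with hF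
  -- evaluations of F and its derivatives via the explicit formula
  have evF : eval ![a, b] F = (a + 1) ^ m - a ^ m - (b + 1) ^ m + b ^ m := by
    simp [hF]
  have evFx : eval ![a, b] (pderiv 0 F) = (m : K) * ((a + 1) ^ (m - 1) - a ^ (m - 1)) := by
    simp [hF, pderiv_mul, pderiv_pow, pderiv_X]
    ring
  have evFy : eval ![a, b] (pderiv 1 F) = -((m : K) * ((b + 1) ^ (m - 1) - b ^ (m - 1))) := by
    simp [hF, pderiv_mul, pderiv_pow, pderiv_X]
    ring
  have evFxx : eval ![a, b] (pderiv 0 (pderiv 0 F)) =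
      (m : K) * ((m - 1 : ℕ) : K) * ((a + 1) ^ (m - 1 - 1) - a ^ (m - 1 - 1)) := by
    simp [hF, pderiv_mul, pderiv_pow, pderiv_X]
    ring
  -- evaluations via the factorization
  have rF : eval ![a, b] F = (a - b) * eval ![a, b] H := by rw [hFH]; simp
  have rFx : eval ![a, b] (pderiv 0 F) =
      eval ![a, b] H + (a - b) * eval ![a, b] (pderiv 0 H) := by
    rw [hFH]
    simp [pderiv_mul, pderiv_X]
    ring
  have rFy : eval ![a, b] (pderiv 1 F) =
      -eval ![a, b] H + (a - b) * eval ![a, b] (pderiv 1 H) := by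
    rw [hFH]
    simp [pderiv_mul, pderiv_X]
    ring
  have rFxx : eval ![a, b] (pderiv 0 (pderiv 0 F)) =
      2 * eval ![a, b] (pderiv 0 H) + (a - b) * eval ![a, b] (pderiv 0 (pderiv 0 H)) := by
    rw [hFH]
    simp [pderiv_mul, pderiv_X]
    ring
  -- auxiliary contradiction
  have aux : ∀ x : K, (x + 1) ^ (m - 1) = x ^ (m - 1) → (x + 1) ^ (m - 1 - 1) = x ^ (m - 1 - 1) →
      False := by
    intro x e1 e2
    have hx0 : x ≠ 0 := by
      rintro rfl
      rw [zero_add, one_pow, zero_pow (by omega : m - 1 ≠ 0)] at e1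
      exact one_ne_zero e1
    have hpow : x ^ (m - 1 - 1) ≠ 0 := pow_ne_zero _ hx0
    have : (x + 1) * x ^ (m - 1 - 1) = x * x ^ (m - 1 - 1) := by
      calc (x + 1) * x ^ (m - 1 - 1) = x ^ (m - 1 - 1) * (x + 1) := by ring
      _ = (x + 1) ^ (m - 1 - 1) * (x + 1) := by rw [e2]
      _ = (x + 1) ^ (m - 1) := (powm1 _).symm
      _ = x ^ (m - 1) := e1
      _ = x ^ (m - 1 - 1) * x := powm1 x
      _ = x * x ^ (m - 1 - 1) := by ring
    have := mul_right_cancel₀ hpow this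
    simp at this
  constructor
  · constructor
    · rintro ⟨s0, sx, sy⟩
      have hFx0 : (m : K) * ((a + 1) ^ (m - 1) - a ^ (m - 1)) = 0 := by
        rw [← evFx, rFx, s0, sx, mul_zero, add_zero]
      have hFy0 : -((m : K) * ((b + 1) ^ (m - 1) - b ^ (m - 1))) = 0 := by
        rw [← evFy, rFy, s0, sy, mul_zero, add_zero, neg_zero]
      have ea : (a + 1) ^ (m - 1) = a ^ (m - 1) := by
        rcases mul_eq_zero.mp hFx0 with hc | hc
        · exact absurd hc hmK
        · exact sub_eq_zero.mp hc
      have eb : (b + 1) ^ (m - 1) = b ^ (m - 1) := by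
        rw [neg_eq_zero] at hFy0
        rcases mul_eq_zero.mp hFy0 with hc | hc
        · exact absurd hc hmK
        · exact sub_eq_zero.mp hc
      have hF0 : (a + 1) ^ m - a ^ m - (b + 1) ^ m + b ^ m = 0 := by
        rw [← evF, rF, s0, mul_zero]
      have eab : a ^ (m - 1) = b ^ (m - 1) := by
        rw [powm, powm, powm, powm, ea, eb] at hF0
        linear_combination hF0
      have hab : a ≠ b := by
        rintro rfl
        have hxx : (m : K) * ((m - 1 : ℕ) : K) * ((a + 1) ^ (m - 1 - 1) - a ^ (m - 1 - 1)) = 0 := by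
          rw [← evFxx, rFxx, sx, sub_self, zero_mul, mul_zero, add_zero]
        have e2 : (a + 1) ^ (m - 1 - 1) = a ^ (m - 1 - 1) := by
          rcases mul_eq_zero.mp hxx with hc | hc
          · exact absurd hc (mul_ne_zero hmK hm1K)
          · exact sub_eq_zero.mp hc
        exact aux a ea e2
      exact ⟨hab, by rw [ea, eab, eb], by rw [eb, eab], eab⟩
    · rintro ⟨hab, e1, e2, e3⟩
      have hab' : a - b ≠ 0 := sub_ne_zero.mpr hab
      have ea : (a + 1) ^ (m - 1) = a ^ (m - 1) := by rw [e1, e2]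
      have eb : (b + 1) ^ (m - 1) = b ^ (m - 1) := by rw [e2, e3]
      have hFx0 : eval ![a, b] (pderiv 0 F) = 0 := by
        rw [evFx, ea, sub_self, mul_zero]
      have hFy0 : eval ![a, b] (pderiv 1 F) = 0 := by
        rw [evFy, eb, sub_self, mul_zero, neg_zero]
      have hF0 : eval ![a, b] F = 0 := by
        rw [evF, powm, powm, powm, powm, ea, eb]
        linear_combination e3
      have s0 : eval ![a, b] H = 0 := by
        rw [rF] at hF0
        exact (mul_eq_zero.mp hF0).resolve_left hab'
      have sx : eval ![a, b] (pderiv 0 H) = 0 := by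
        rw [rFx, s0, zero_add] at hFx0
        exact (mul_eq_zero.mp hFx0).resolve_left hab'
      have sy : eval ![a, b] (pderiv 1 H) = 0 := by
        rw [rFy, s0, neg_zero, zero_add] at hFy0
        exact (mul_eq_zero.mp hFy0).resolve_left hab'
      exact ⟨s0, sx, sy⟩
  · rintro ⟨s0, sx, sy⟩
    have hFx0 : (m : K) * ((a + 1) ^ (m - 1) - a ^ (m - 1)) = 0 := by
      rw [← evFx, rFx, s0, sx, mul_zero, add_zero]
    have ea : (a + 1) ^ (m - 1) = a ^ (m - 1) := by
      rcases mul_eq_zero.mp hFx0 with hc | hc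
      · exact absurd hc hmK
      · exact sub_eq_zero.mp hc
    constructor
    · rw [← evFxx, rFxx, sx, mul_zero, zero_add]
    · intro hc
      rcases mul_eq_zero.mp hc with hc' | hc'
      · exact absurd hc' (mul_ne_zero hmK hm1K)
      · exact aux a ea (sub_eq_zero.mp hc')

/-- Let `m ≥ 3` with `p ∤ m` and `m ≢ 1 (mod p)`.  The singular points of `h` over the
algebraic closure `K` are exactly the points `(x₀,y₀)` with `x₀ ≠ y₀` and
`(x₀+1)^{m-1} = (y₀+1)^{m-1} = x₀^{m-1} = y₀^{m-1}`, each of multiplicity `2`; and the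
projective closure of `h = 0` has no singular point on the line at infinity (neither at a
point `(ω : 1 : 0)` — chart `y = 1`, dehomogenization `ĥ(x,1,z)` at `(ω,0)` — nor at
`(1 : 0 : 0)` — chart `x = 1`, dehomogenization `ĥ(1,y,z)` at `(0,0)`). -/
theorem stmt18 (p : ℕ) [Fact p.Prime] (hp : Odd p)
    (m : ℕ) (hm : 3 ≤ m) (hpm : ¬ p ∣ m) (hm1 : ¬ m ≡ 1 [MOD p])
    (h : MvPolynomial (Fin 2) (ZMod p))
    (hfh : fpoly p m = (X 0 - X 1) * h)
    (hhat : MvPolynomial (Fin 3) (ZMod p))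
    (hhom : hhat.IsHomogeneous (m - 2))
    (hdeh : aeval ![(X 0 : MvPolynomial (Fin 2) (ZMod p)), X 1, 1] hhat = h) :
    (∀ x0 y0 : AlgebraicClosure (ZMod p),
      IsSingAt (toK p h) x0 y0 ↔
        (x0 ≠ y0 ∧ (x0 + 1) ^ (m - 1) = (y0 + 1) ^ (m - 1) ∧
          (y0 + 1) ^ (m - 1) = x0 ^ (m - 1) ∧ x0 ^ (m - 1) = y0 ^ (m - 1))) ∧
    (∀ x0 y0 : AlgebraicClosure (ZMod p),
      IsSingAt (toK p h) x0 y0 → multAt (toK p h) x0 y0 = 2) ∧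
    (∀ ω : AlgebraicClosure (ZMod p),
      ¬ 2 ≤ multAt (toK p (aeval ![(X 0 : MvPolynomial (Fin 2) (ZMod p)), 1, X 1] hhat)) ω 0) ∧
    ¬ 2 ≤ multAt (toK p (aeval ![1, (X 0 : MvPolynomial (Fin 2) (ZMod p)), X 1] hhat)) 0 0 := by
  have hp' : p.Prime := Fact.out
  haveI : CharP (AlgebraicClosure (ZMod p)) p :=
    charP_of_injective_algebraMap (algebraMap (ZMod p) (AlgebraicClosure (ZMod p))).injective p
  have hmK : (m : AlgebraicClosure (ZMod p)) ≠ 0 := by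
    rw [Ne, CharP.cast_eq_zero_iff (AlgebraicClosure (ZMod p)) p]
    exact hpm
  have hm1K : ((m - 1 : ℕ) : AlgebraicClosure (ZMod p)) ≠ 0 := by
    rw [Ne, CharP.cast_eq_zero_iff (AlgebraicClosure (ZMod p)) p]
    intro hd
    exact hm1 (((Nat.modEq_iff_dvd' (by omega)).mpr hd).symm)
  -- the factorization over the algebraic closure
  have hFHK : ((X 0 + 1) ^ m - X 0 ^ m - (X 1 + 1) ^ m + X 1 ^ m :
      MvPolynomial (Fin 2) (AlgebraicClosure (ZMod p))) = (X 0 - X 1) * toK p h := by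
    have := congrArg (map (algebraMap (ZMod p) (AlgebraicClosure (ZMod p)))) hfh
    simp only [fpoly, toK, map_sub, map_add, map_pow, map_mul, map_one,
      MvPolynomial.map_X] at this ⊢
    exact this
  -- the homogenization identity
  have hB : (X 2 : MvPolynomial (Fin 3) (ZMod p)) * (X 0 - X 1) * hhat =
      (X 0 + X 2) ^ m - X 0 ^ m - (X 1 + X 2) ^ m + X 1 ^ m := by
    have key : ((X 2 : MvPolynomial (Fin 3) (ZMod p)) * (X 0 - X 1) * hhat -
        ((X 0 + X 2) ^ m - X 0 ^ m - (X 1 + X 2) ^ m + X 1 ^ m)) = 0 := by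
      apply dehom_eq_zero (n := m)
      · have hL : ((X 2 : MvPolynomial (Fin 3) (ZMod p)) * (X 0 - X 1) * hhat).IsHomogeneous m := by
          have := (((isHomogeneous_X (ZMod p) 2).mul
            ((isHomogeneous_X (ZMod p) 0).sub (isHomogeneous_X (ZMod p) 1))).mul hhom)
          convert this using 1
          omega
        have hpow : ∀ i j : Fin 3,
            ((X i + X j : MvPolynomial (Fin 3) (ZMod p)) ^ m).IsHomogeneous m := by
          intro i j
          have := ((isHomogeneous_X (ZMod p) i).add (isHomogeneous_X (ZMod p) j)).pow m
          simpa using this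
        have hXp : ∀ i : Fin 3, ((X i : MvPolynomial (Fin 3) (ZMod p)) ^ m).IsHomogeneous m := by
          intro i
          have := (isHomogeneous_X (ZMod p) i).pow m
          simpa using this
        exact hL.sub ((((hpow 0 2).sub (hXp 0)).sub (hpow 1 2)).add (hXp 1))
      · rw [map_sub]
        simp only [map_mul, map_add, map_sub, map_pow, aeval_X, map_one,
          Matrix.cons_val_zero, Matrix.cons_val_one, Matrix.head_cons,
          Matrix.cons_val_two, Matrix.tail_cons]
        rw [one_mul, hdeh, ← hfh, fpoly]
        ring
    exact sub_eq_zero.mp key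
  -- chart identities over the algebraic closure
  have hCyK : (X 1 : MvPolynomial (Fin 2) (AlgebraicClosure (ZMod p))) * (X 0 - 1) *
      toK p (aeval ![(X 0 : MvPolynomial (Fin 2) (ZMod p)), 1, X 1] hhat) =
      (X 0 + X 1) ^ m - X 0 ^ m - (X 1 + 1) ^ m + 1 := by
    have h1 := congrArg (aeval ![(X 0 : MvPolynomial (Fin 2) (ZMod p)), 1, X 1]) hB
    simp only [map_mul, map_sub, map_add, map_pow, map_one, aeval_X, Matrix.cons_val_zero,
      Matrix.cons_val_one, Matrix.head_cons, Matrix.cons_val_two, Matrix.tail_cons] at h1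
    have h2 := congrArg (map (algebraMap (ZMod p) (AlgebraicClosure (ZMod p)))) h1
    simp only [toK, map_sub, map_add, map_pow, map_mul, map_one, MvPolynomial.map_X] at h2 ⊢
    linear_combination h2
  have hCxK : (X 1 : MvPolynomial (Fin 2) (AlgebraicClosure (ZMod p))) * (1 - X 0) *
      toK p (aeval ![1, (X 0 : MvPolynomial (Fin 2) (ZMod p)), X 1] hhat) =
      (X 1 + 1) ^ m - 1 - (X 0 + X 1) ^ m + X 0 ^ m := by
    have h1 := congrArg (aeval ![1, (X 0 : MvPolynomial (Fin 2) (ZMod p)), X 1]) hB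
    simp only [map_mul, map_sub, map_add, map_pow, map_one, aeval_X, Matrix.cons_val_zero,
      Matrix.cons_val_one, Matrix.head_cons, Matrix.cons_val_two, Matrix.tail_cons] at h1
    have h2 := congrArg (map (algebraMap (ZMod p) (AlgebraicClosure (ZMod p)))) h1
    simp only [toK, map_sub, map_add, map_pow, map_mul, map_one, MvPolynomial.map_X] at h2 ⊢
    linear_combination h2
  refine ⟨?_, ?_, ?_, ?_⟩
  · intro a b
    exact (singmain m hm hmK hm1K (toK p h) hFHK a b).1
  · intro a b hs
    obtain ⟨heq, hne⟩ := (singmain m hm hmK hm1K (toK p h) hFHK a b).2 hs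
    obtain ⟨s0, sx, sy⟩ := hs
    apply multAt_eq_two s0 sx sy
    intro hc
    rw [hc, mul_zero] at heq
    exact hne heq.symm
  · intro ω hcon
    obtain ⟨hQ0, hQz⟩ := two_le_multAt hcon
    exact charty m hm ω hmK hm1K _ hCyK hQ0 hQz
  · intro hcon
    obtain ⟨hQ0, _⟩ := two_le_multAt hcon
    exact chartx m hm hmK _ hCxK hQ0
end
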